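/- arXiv:1408.2693 — 6 statements merged into one kernel-verified Lean document; each statement's English description precedes it below -/
import Mathlib

section
/- Let L > 0 and let γ : [0,L] → ℝ² be continuous and injective. Suppose there exist break points 0 = s_0 < s_1 < … < s_M = L such that the restriction of γ to each [s_{m−1}, s_m] is twice continuously differentiable (with one-sided derivatives at the endpoints), that |γ'(t)| = 1 on each piece (so γ is an arclength parametrization), and that at each interior break point s_m the one-sided derivatives satisfy γ'(s_m−) + c·γ'(s_m+) ≠ 0 for every real c > 0. Then there exists a constant C_Γ ≥ 1 such that C_Γ^{−1} |s − t| ≤ |γ(s) − γ(t)| ≤ C_Γ |s − t| for all s, t ∈ [0,L] with s ≠ t. -/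
open Set
open scoped InnerProductSpace

private lemma sMono (M : ℕ) (s : ℕ → ℝ) (hsmono : ∀ m < M, s m < s (m + 1)) :
    ∀ m n, m ≤ n → n ≤ M → s m ≤ s n := by
  intro m n hmn hnM
  induction n with
  | zero => simp_all
  | succ k ih =>
    rcases Nat.lt_or_ge m (k+1) with h | h
    · exact (ih (Nat.lt_succ_iff.1 h) (le_of_lt hnM)).trans
        (le_of_lt (hsmono k hnM))
    · have : m = k + 1 := le_antisymm hmn h
      simp [this]

private lemma existsPiece (M : ℕ) (hM : 1 ≤ M) (s : ℕ → ℝ) (L : ℝ)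
    (hs0 : s 0 = 0) (hsM : s M = L) (hsmono : ∀ m < M, s m < s (m + 1))
    {t : ℝ} (ht : t ∈ Icc 0 L) : ∃ m < M, t ∈ Icc (s m) (s (m + 1)) := by
  by_cases hP : ∃ m < M, s m ≤ t ∧ t ≤ s (m+1)
  · obtain ⟨m, h2, h1, h3⟩ := hP
    exact ⟨m, h2, h1, h3⟩
  exfalso
  push_neg at hP
  set P : ℕ → Prop := fun m => s m ≤ t with hPdef
  have hP0 : P 0 := by simp only [hPdef, hs0]; exact ht.1
  set m0 := Nat.findGreatest P M with hm0def
  have hm0M : m0 ≤ M := Nat.findGreatest_le M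
  have hPm0 : P m0 := Nat.findGreatest_spec (Nat.zero_le M) hP0
  rcases Nat.lt_or_ge m0 M with h | h
  · have hnot : ¬ P (m0 + 1) := Nat.findGreatest_is_greatest (Nat.lt_succ_self m0) h
    exact hnot (le_of_lt (hP m0 h hPm0))
  · have hm0 : m0 = M := le_antisymm hm0M h
    have hMm : M - 1 < M := Nat.sub_lt (by omega) one_pos
    have hMs : M - 1 + 1 = M := by omega
    have h1 : s (M-1) ≤ t := by
      have h2 : s (M-1) ≤ s M := by
        have := hsmono (M-1) hMm; rw [hMs] at this; exact this.le
      have h3 : s M ≤ t := hm0 ▸ hPm0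
      linarith
    have := hP (M-1) hMm h1
    rw [hMs, hsM] at this
    linarith [ht.2]
section
variable (γ : ℝ → EuclideanSpace ℝ (Fin 2))

open scoped InnerProductSpace

private lemma keyA (a b : ℝ)
    (hγ : ContDiffOn ℝ 2 γ (Icc a b)) (w : EuclideanSpace ℝ (Fin 2))
    {δ x y : ℝ} (hx : x ∈ Icc a b) (hy : y ∈ Icc a b) (hxy : x ≤ y)
    (hδ : ∀ u ∈ Ioo x y, δ ≤ ⟪w, derivWithin γ (Icc a b) u⟫_ℝ) :
    δ * (y - x) ≤ ⟪w, γ y - γ x⟫_ℝ := by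
  have hcont : ContinuousOn (fun u => ⟪w, γ u⟫_ℝ) (Icc x y) :=
    (innerSL ℝ w).continuous.comp_continuousOn
      (hγ.continuousOn.mono (Icc_subset_Icc hx.1 hy.2))
  have hder : ∀ u ∈ Ioo x y, HasDerivAt (fun u => ⟪w, γ u⟫_ℝ)
      ⟪w, derivWithin γ (Icc a b) u⟫_ℝ u := by
    intro u hu
    have hu' : u ∈ Icc a b := ⟨hx.1.trans hu.1.le, hu.2.le.trans hy.2⟩
    have hnb : Icc a b ∈ nhds u :=
      Icc_mem_nhds (lt_of_le_of_lt hx.1 hu.1) (lt_of_lt_of_le hu.2 hy.2)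
    have hdiff : DifferentiableAt ℝ γ u :=
      ((hγ.differentiableOn (by norm_num)) u hu').differentiableAt hnb
    have h1 : HasDerivAt γ (deriv γ u) u := hdiff.hasDerivAt
    have h2 : derivWithin γ (Icc a b) u = deriv γ u := derivWithin_of_mem_nhds hnb
    rw [h2]
    exact ((innerSL ℝ w).hasFDerivAt.comp_hasDerivAt u h1)
  have := Convex.mul_sub_le_image_sub_of_le_deriv (convex_Icc x y) hcont
    (fun u hu => (hder u (by rwa [interior_Icc] at hu)).differentiableAt.differentiableWithinAt)
    (C := δ) (fun u hu => by
      rw [interior_Icc] at hu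
      rw [(hder u hu).deriv]
      exact hδ u hu)
    x (left_mem_Icc.2 hxy) y (right_mem_Icc.2 hxy) hxy
  have h3 : ⟪w, γ y⟫_ℝ - ⟪w, γ x⟫_ℝ = ⟪w, γ y - γ x⟫_ℝ := (inner_sub_right _ _ _).symm
  linarith [this, h3.symm.le]

private lemma pieceLocal' (a b : ℝ) (hab : a < b)
    (hγ : ContDiffOn ℝ 2 γ (Icc a b)) (w : EuclideanSpace ℝ (Fin 2))
    {δ t : ℝ} (ht : t ∈ Icc a b)
    (hδ : δ < ⟪w, derivWithin γ (Icc a b) t⟫_ℝ) :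
    ∃ ε > 0, ∀ x ∈ Icc a b, ∀ y ∈ Icc a b, |x - t| < ε → |y - t| < ε → x ≤ y →
      δ * (y - x) ≤ ⟪w, γ y - γ x⟫_ℝ := by
  have hφ : ContinuousOn (fun u => ⟪w, derivWithin γ (Icc a b) u⟫_ℝ) (Icc a b) :=
    (innerSL ℝ w).continuous.comp_continuousOn
      (hγ.continuousOn_derivWithin (uniqueDiffOn_Icc hab) (by norm_num))
  have hct : ContinuousWithinAt (fun u => ⟪w, derivWithin γ (Icc a b) u⟫_ℝ) (Icc a b) t :=
    hφ t ht
  set ψ := fun u => ⟪w, derivWithin γ (Icc a b) u⟫_ℝ with hψ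
  have hr : 0 < ψ t - δ := sub_pos.2 hδ
  obtain ⟨ε, hε, hball⟩ := Metric.continuousWithinAt_iff.1 hct (ψ t - δ) hr
  refine ⟨ε, hε, fun x hx y hy hxt hyt hxy => ?_⟩
  refine keyA γ a b hγ w hx hy hxy (fun u hu => ?_)
  have hu' : u ∈ Icc a b := ⟨hx.1.trans hu.1.le, hu.2.le.trans hy.2⟩
  have hdist : dist u t < ε := by
    rw [Real.dist_eq]
    rcases le_total u t with h | h
    · have : t - u < ε := by
        have := abs_lt.1 hxt
        have h2 : x ≤ u := hu.1.le
        have : t - u ≤ t - x := by linarith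
        linarith [abs_lt.1 hxt]
      rw [abs_sub_comm, abs_of_nonneg (by linarith)]; linarith
    · have : u - t < ε := by
        have h2 : u ≤ y := hu.2.le
        linarith [abs_lt.1 hyt]
      rw [abs_of_nonneg (by linarith)]; linarith
  have := hball hu' hdist
  rw [Real.dist_eq, abs_lt] at this
  linarith [this.1]

private lemma localLower
    (L : ℝ) (hL : 0 < L)
    (M : ℕ) (hM : 1 ≤ M) (s : ℕ → ℝ)
    (hs0 : s 0 = 0) (hsM : s M = L) (hsmono : ∀ m < M, s m < s (m + 1))
    (hC2 : ∀ m < M, ContDiffOn ℝ 2 γ (Icc (s m) (s (m + 1))))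
    (hunit : ∀ m < M, ∀ t ∈ Icc (s m) (s (m + 1)),
      ‖derivWithin γ (Icc (s m) (s (m + 1))) t‖ = 1)
    (hcorner : ∀ m, 0 < m → m < M → ∀ c : ℝ, 0 < c →
      derivWithin γ (Icc (s (m - 1)) (s m)) (s m)
        + c • derivWithin γ (Icc (s m) (s (m + 1))) (s m) ≠ 0)
    {t : ℝ} (ht : t ∈ Icc 0 L) :
    ∃ δ > 0, ∃ ε > 0, ∀ x ∈ Icc 0 L, ∀ y ∈ Icc 0 L,
      |x - t| < ε → |y - t| < ε → x ≤ y → δ * (y - x) ≤ ‖γ y - γ x‖ := by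
  have sMono' := sMono M s hsmono
  by_cases hcor : ∃ k, 0 < k ∧ k < M ∧ t = s k
  · -- corner case
    obtain ⟨k, hk0, hkM, htk⟩ := hcor
    have hk1 : k - 1 + 1 = k := Nat.succ_pred_eq_of_pos hk0
    have hk1M : k - 1 < M := by omega
    set a := s (k - 1) with ha
    set b := s k with hb
    set c' := s (k + 1) with hc'
    have hab : a < b := by have := hsmono (k-1) hk1M; rwa [hk1] at this
    have hbc : b < c' := hsmono k hkM
    have hγ₁ : ContDiffOn ℝ 2 γ (Icc a b) := by
      have := hC2 (k-1) hk1M; rwa [hk1] at this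
    have hγ₂ : ContDiffOn ℝ 2 γ (Icc b c') := hC2 k hkM
    set v₁ := derivWithin γ (Icc a b) t with hv₁def
    set v₂ := derivWithin γ (Icc b c') t with hv₂def
    have htab : t ∈ Icc a b := ⟨htk ▸ hab.le, htk ▸ le_refl b⟩
    have htbc : t ∈ Icc b c' := ⟨htk ▸ le_refl b, htk ▸ hbc.le⟩
    have hn₁ : ‖v₁‖ = 1 := by
      have := hunit (k-1) hk1M; rw [hk1] at this; exact this t htab
    have hn₂ : ‖v₂‖ = 1 := hunit k hkM t htbc
    have hz : v₁ + v₂ ≠ 0 := by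
      have := hcorner k hk0 hkM 1 one_pos
      rw [one_smul] at this
      rw [hv₁def, hv₂def, htk]
      exact this
    set z := v₁ + v₂ with hzdef
    have hznorm : 0 < ‖z‖ := norm_pos_iff.2 hz
    set w := ‖z‖⁻¹ • z with hwdef
    have hwnorm : ‖w‖ = 1 := by
      rw [hwdef, norm_smul, norm_inv, norm_norm, inv_mul_cancel₀ hznorm.ne']
    have hzsq : ‖z‖ ^ 2 = 2 + 2 * ⟪v₁, v₂⟫_ℝ := by
      rw [hzdef, norm_add_sq_real, hn₁, hn₂]; ring
    have e1 : ⟪z, v₁⟫_ℝ = 1 + ⟪v₁, v₂⟫_ℝ := by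
      rw [hzdef, inner_add_left, real_inner_self_eq_norm_sq, hn₁, real_inner_comm v₂ v₁]
      ring
    have e2 : ⟪z, v₂⟫_ℝ = 1 + ⟪v₁, v₂⟫_ℝ := by
      rw [hzdef, inner_add_left, real_inner_self_eq_norm_sq, hn₂]
      ring
    have e3 : 1 + ⟪v₁, v₂⟫_ℝ = ‖z‖ ^ 2 / 2 := by linarith [hzsq]
    have hinner₁ : ⟪w, v₁⟫_ℝ = ‖z‖ / 2 := by
      rw [hwdef, real_inner_smul_left, e1, e3, pow_two]
      field_simp
    have hinner₂ : ⟪w, v₂⟫_ℝ = ‖z‖ / 2 := by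
      rw [hwdef, real_inner_smul_left, e2, e3, pow_two]
      field_simp
    have hδpos : 0 < ‖z‖ / 4 := by positivity
    obtain ⟨ε₁, hε₁, H₁⟩ := pieceLocal' γ a b hab hγ₁ w htab
      (δ := ‖z‖ / 4) (by rw [← hv₁def, hinner₁]; linarith)
    obtain ⟨ε₂, hε₂, H₂⟩ := pieceLocal' γ b c' hbc hγ₂ w htbc
      (δ := ‖z‖ / 4) (by rw [← hv₂def, hinner₂]; linarith)
    refine ⟨‖z‖ / 4, hδpos, min (min ε₁ ε₂) (min (b - a) (c' - b)),
      lt_min (lt_min hε₁ hε₂) (lt_min (by linarith) (by linarith)), fun x hx y hy hxt hyt hxy => ?_⟩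
    have hxt₁ : |x - t| < ε₁ := lt_of_lt_of_le hxt (le_trans (min_le_left _ _) (min_le_left _ _))
    have hxt₂ : |x - t| < ε₂ := lt_of_lt_of_le hxt (le_trans (min_le_left _ _) (min_le_right _ _))
    have hyt₁ : |y - t| < ε₁ := lt_of_lt_of_le hyt (le_trans (min_le_left _ _) (min_le_left _ _))
    have hyt₂ : |y - t| < ε₂ := lt_of_lt_of_le hyt (le_trans (min_le_left _ _) (min_le_right _ _))
    have hxab : x - t > -(b - a) := by
      have := (abs_lt.1 hxt).1
      have h2 : min (b-a) (c'-b) ≤ b - a := min_le_left _ _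
      have h3 : min (min ε₁ ε₂) (min (b-a) (c'-b)) ≤ min (b-a) (c'-b) := min_le_right _ _
      linarith
    have hybc : y - t < c' - b := by
      have := (abs_lt.1 hyt).2
      have h2 : min (b-a) (c'-b) ≤ c' - b := min_le_right _ _
      have h3 : min (min ε₁ ε₂) (min (b-a) (c'-b)) ≤ min (b-a) (c'-b) := min_le_right _ _
      linarith
    have key : ‖z‖ / 4 * (y - x) ≤ ⟪w, γ y - γ x⟫_ℝ := by
      rcases le_total y t with hyle | hyle
      · -- both in Icc a b
        have hxmem : x ∈ Icc a b := ⟨by linarith, by linarith⟩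
        have hymem : y ∈ Icc a b := ⟨by linarith, by linarith⟩
        exact H₁ x hxmem y hymem hxt₁ hyt₁ hxy
      rcases le_total t x with hxle | hxle
      · have hxmem : x ∈ Icc b c' := ⟨by linarith, by linarith⟩
        have hymem : y ∈ Icc b c' := ⟨by linarith, by linarith⟩
        exact H₂ x hxmem y hymem hxt₂ hyt₂ hxy
      · -- x ≤ t ≤ y
        have hxmem : x ∈ Icc a b := ⟨by linarith, by linarith⟩
        have hymem : y ∈ Icc b c' := ⟨by linarith, by linarith⟩
        have h1 := H₁ x hxmem t htab hxt₁ (by simpa using hε₁) hxle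
        have h2 := H₂ t htbc y hymem (by simpa using hε₂) hyt₂ hyle
        have h3 : ⟪w, γ y - γ t⟫_ℝ + ⟪w, γ t - γ x⟫_ℝ = ⟪w, γ y - γ x⟫_ℝ := by
          rw [← inner_add_right]
          congr 1
          abel
        linarith
    calc ‖z‖ / 4 * (y - x) ≤ ⟪w, γ y - γ x⟫_ℝ := key
      _ ≤ ‖w‖ * ‖γ y - γ x‖ := real_inner_le_norm _ _
      _ = ‖γ y - γ x‖ := by rw [hwnorm, one_mul]
  · -- single piece case
    push_neg at hcor
    obtain ⟨m, hm, htm⟩ := existsPiece M hM s L hs0 hsM hsmono ht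
    have hab : s m < s (m+1) := hsmono m hm
    have hlow : m = 0 ∨ s m < t := by
      rcases Nat.eq_zero_or_pos m with h | h
      · exact Or.inl h
      · exact Or.inr (lt_of_le_of_ne htm.1 (fun he => hcor m h hm he.symm))
    have hhigh : m + 1 = M ∨ t < s (m+1) := by
      rcases Nat.lt_or_ge (m+1) M with h | h
      · exact Or.inr (lt_of_le_of_ne htm.2 (fun he => hcor (m+1) (Nat.succ_pos m) h he))
      · exact Or.inl (le_antisymm (by omega) h)
    set ε₀ : ℝ := min (if m = 0 then 1 else t - s m) (if m + 1 = M then 1 else s (m+1) - t)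
      with hε₀def
    have hε₀pos : 0 < ε₀ := by
      apply lt_min
      · split
        · norm_num
        · rcases hlow with h | h
          · exact absurd h (by assumption)
          · linarith
      · split
        · norm_num
        · rcases hhigh with h | h
          · exact absurd h (by assumption)
          · linarith
    have hsub : ∀ x ∈ Icc (0:ℝ) L, |x - t| < ε₀ → x ∈ Icc (s m) (s (m+1)) := by
      intro x hx hxt
      obtain ⟨h1, h2⟩ := abs_lt.1 hxt
      constructor
      · by_cases h : m = 0
        · rw [h, hs0]; exact hx.1
        · have : ε₀ ≤ t - s m := by
            rw [hε₀def]; exact le_trans (min_le_left _ _) (by rw [if_neg h])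
          linarith
      · by_cases h : m + 1 = M
        · rw [h, hsM]; exact hx.2
        · have : ε₀ ≤ s (m+1) - t := by
            rw [hε₀def]; exact le_trans (min_le_right _ _) (by rw [if_neg h])
          linarith
    set w := derivWithin γ (Icc (s m) (s (m+1))) t with hwdef
    have hwnorm : ‖w‖ = 1 := hunit m hm t htm
    obtain ⟨ε₁, hε₁, H⟩ := pieceLocal' γ (s m) (s (m+1)) hab (hC2 m hm) w htm
      (δ := 1/2) (by
        rw [← hwdef, real_inner_self_eq_norm_sq, hwnorm]; norm_num)
    refine ⟨1/2, by norm_num, min ε₀ ε₁, lt_min hε₀pos hε₁, fun x hx y hy hxt hyt hxy => ?_⟩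
    have hx' := hsub x hx (lt_of_lt_of_le hxt (min_le_left _ _))
    have hy' := hsub y hy (lt_of_lt_of_le hyt (min_le_left _ _))
    have := H x hx' y hy' (lt_of_lt_of_le hxt (min_le_right _ _))
      (lt_of_lt_of_le hyt (min_le_right _ _)) hxy
    calc (1/2) * (y - x) ≤ ⟪w, γ y - γ x⟫_ℝ := this
      _ ≤ ‖w‖ * ‖γ y - γ x‖ := real_inner_le_norm _ _
      _ = ‖γ y - γ x‖ := by rw [hwnorm, one_mul]

private lemma upperBound
    (L : ℝ) (M : ℕ) (hM : 1 ≤ M) (s : ℕ → ℝ)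
    (hs0 : s 0 = 0) (hsM : s M = L) (hsmono : ∀ m < M, s m < s (m + 1))
    (hC2 : ∀ m < M, ContDiffOn ℝ 2 γ (Icc (s m) (s (m + 1))))
    (hunit : ∀ m < M, ∀ t ∈ Icc (s m) (s (m + 1)),
      ‖derivWithin γ (Icc (s m) (s (m + 1))) t‖ = 1) :
    ∀ x ∈ Icc (0:ℝ) L, ∀ y ∈ Icc (0:ℝ) L, x ≤ y → ‖γ y - γ x‖ ≤ y - x := by
  have piece : ∀ m < M, ∀ x ∈ Icc (s m) (s (m+1)), ∀ y ∈ Icc (s m) (s (m+1)),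
      x ≤ y → ‖γ y - γ x‖ ≤ y - x := by
    intro m hm x hx y hy hxy
    have := Convex.norm_image_sub_le_of_norm_derivWithin_le
      ((hC2 m hm).differentiableOn (by norm_num))
      (C := 1) (fun u hu => (hunit m hm u hu).le) (convex_Icc _ _) hx hy
    rw [one_mul, Real.norm_eq_abs, abs_of_nonneg (by linarith)] at this
    exact this
  have claim : ∀ k, k ≤ M → ∀ x y, 0 ≤ x → x ≤ y → y ≤ s k → ‖γ y - γ x‖ ≤ y - x := by
    intro k
    induction k with
    | zero =>
      intro _ x y hx hxy hy
      rw [hs0] at hy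
      have hxyeq : x = y := le_antisymm hxy (hy.trans hx)
      simp [hxyeq]
    | succ k ih =>
      intro hk x y hx hxy hy
      have hkM : k < M := hk
      by_cases h : y ≤ s k
      · exact ih (le_of_lt hkM) x y hx hxy h
      push_neg at h
      by_cases h2 : s k ≤ x
      · exact piece k hkM x ⟨h2, hxy.trans hy⟩ y ⟨h.le, hy⟩ hxy
      push_neg at h2
      have h1 : ‖γ y - γ (s k)‖ ≤ y - s k := piece k hkM (s k) ⟨le_refl _, (hsmono k hkM).le⟩
        y ⟨h.le, hy⟩ h.le
      have h2' : ‖γ (s k) - γ x‖ ≤ s k - x := ih (le_of_lt hkM) x (s k) hx h2.le (le_refl _)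
      calc ‖γ y - γ x‖ = ‖(γ y - γ (s k)) + (γ (s k) - γ x)‖ := by congr 1; abel
        _ ≤ ‖γ y - γ (s k)‖ + ‖γ (s k) - γ x‖ := norm_add_le _ _
        _ ≤ (y - s k) + (s k - x) := add_le_add h1 h2'
        _ = y - x := by ring
  intro x hx y hy hxy
  exact claim M (le_refl M) x y hx.1 hxy (hsM ▸ hy.2)

end

/-- Bi-Lipschitz continuity of a piecewise smooth arclength parametrization of an
open boundary piece. -/
theorem biLipschitz_of_piecewise_smooth_arclength
    (L : ℝ) (hL : 0 < L) (γ : ℝ → EuclideanSpace ℝ (Fin 2))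
    (M : ℕ) (hM : 1 ≤ M) (s : ℕ → ℝ)
    (hs0 : s 0 = 0) (hsM : s M = L) (hsmono : ∀ m < M, s m < s (m + 1))
    (hcont : ContinuousOn γ (Icc 0 L))
    (hinj : InjOn γ (Icc 0 L))
    (hC2 : ∀ m < M, ContDiffOn ℝ 2 γ (Icc (s m) (s (m + 1))))
    (hunit : ∀ m < M, ∀ t ∈ Icc (s m) (s (m + 1)),
      ‖derivWithin γ (Icc (s m) (s (m + 1))) t‖ = 1)
    (hcorner : ∀ m, 0 < m → m < M → ∀ c : ℝ, 0 < c →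
      derivWithin γ (Icc (s (m - 1)) (s m)) (s m)
        + c • derivWithin γ (Icc (s m) (s (m + 1))) (s m) ≠ 0) :
    ∃ C : ℝ, 1 ≤ C ∧ ∀ x ∈ Icc (0 : ℝ) L, ∀ y ∈ Icc (0 : ℝ) L, x ≠ y →
      C⁻¹ * |x - y| ≤ ‖γ x - γ y‖ ∧ ‖γ x - γ y‖ ≤ C * |x - y| := by
  have hupper := upperBound γ L M hM s hs0 hsM hsmono hC2 hunit
  have hlocal : ∀ t : Icc (0:ℝ) L, ∃ δ > 0, ∃ ε > 0, ∀ x ∈ Icc (0:ℝ) L, ∀ y ∈ Icc (0:ℝ) L,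
      |x - (t:ℝ)| < ε → |y - (t:ℝ)| < ε → x ≤ y → δ * (y - x) ≤ ‖γ y - γ x‖ :=
    fun t => localLower γ L hL M hM s hs0 hsM hsmono hC2 hunit hcorner t.2
  choose δf hδf εf hεf H using hlocal
  have hcover : Icc (0:ℝ) L ⊆ ⋃ t : Icc (0:ℝ) L, Metric.ball (t:ℝ) (εf t / 2) := by
    intro x hx
    exact mem_iUnion.2 ⟨⟨x, hx⟩, Metric.mem_ball_self (half_pos (hεf ⟨x, hx⟩))⟩
  obtain ⟨fs, hfs⟩ := isCompact_Icc.elim_finite_subcover _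
    (fun t : Icc (0:ℝ) L => Metric.isOpen_ball) hcover
  have h0mem : (0:ℝ) ∈ Icc (0:ℝ) L := ⟨le_refl _, hL.le⟩
  have hne : fs.Nonempty := by
    by_contra h
    rw [Finset.not_nonempty_iff_eq_empty] at h
    have := hfs h0mem
    simp [h] at this
  set εm := fs.inf' hne (fun t => εf t / 2) with hεmdef
  set δm := fs.inf' hne δf with hδmdef
  have hεm : 0 < εm := by
    rw [hεmdef, Finset.lt_inf'_iff]
    exact fun t _ => half_pos (hεf t)
  have hδm : 0 < δm := by
    rw [hδmdef, Finset.lt_inf'_iff]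
    exact fun t _ => hδf t
  have near : ∀ x ∈ Icc (0:ℝ) L, ∀ y ∈ Icc (0:ℝ) L, x ≤ y → y - x < εm →
      δm * (y - x) ≤ ‖γ y - γ x‖ := by
    intro x hx y hy hxy hnear
    have := hfs hx
    simp only [mem_iUnion, Metric.mem_ball] at this
    obtain ⟨t, ht, hxt⟩ := this
    rw [Real.dist_eq] at hxt
    have hεle : εm ≤ εf t / 2 := hεmdef ▸ Finset.inf'_le _ ht
    have hxt' : |x - (t:ℝ)| < εf t := lt_of_lt_of_le hxt (half_le_self (hεf t).le)
    have hyt : |y - (t:ℝ)| < εf t := by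
      have h1 : |y - (t:ℝ)| ≤ (y - x) + |x - (t:ℝ)| := by
        have : y - (t:ℝ) = (y - x) + (x - (t:ℝ)) := by ring
        rw [this]
        calc |(y-x) + (x-(t:ℝ))| ≤ |y-x| + |x-(t:ℝ)| := abs_add_le _ _
          _ = (y - x) + |x - (t:ℝ)| := by rw [abs_of_nonneg (by linarith)]
      linarith
    have hb := H t x hx y hy hxt' hyt hxy
    have hδle : δm ≤ δf t := hδmdef ▸ Finset.inf'_le _ ht
    calc δm * (y - x) ≤ δf t * (y - x) := mul_le_mul_of_nonneg_right hδle (by linarith)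
      _ ≤ ‖γ y - γ x‖ := hb
  have hfar : ∃ c₂ > 0, ∀ x ∈ Icc (0:ℝ) L, ∀ y ∈ Icc (0:ℝ) L, x ≤ y → εm ≤ y - x →
      c₂ * (y - x) ≤ ‖γ y - γ x‖ := by
    set K := (Icc (0:ℝ) L ×ˢ Icc (0:ℝ) L) ∩ {p : ℝ × ℝ | εm ≤ p.2 - p.1} with hKdef
    by_cases hKne : K.Nonempty
    · have hKc : IsCompact K := (isCompact_Icc.prod isCompact_Icc).inter_right
        (isClosed_le continuous_const (continuous_snd.sub continuous_fst))
      have hcontK : ContinuousOn (fun p : ℝ × ℝ => ‖γ p.2 - γ p.1‖) K := by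
        apply ContinuousOn.norm
        apply ContinuousOn.sub
        · exact hcont.comp continuous_snd.continuousOn (fun p hp => hp.1.2)
        · exact hcont.comp continuous_fst.continuousOn (fun p hp => hp.1.1)
      obtain ⟨p0, hp0K, hp0min'⟩ := hKc.exists_isMinOn hKne hcontK
      have hp0min : ∀ p ∈ K, ‖γ p0.2 - γ p0.1‖ ≤ ‖γ p.2 - γ p.1‖ := fun p hp => hp0min' hp
      have hμpos : 0 < ‖γ p0.2 - γ p0.1‖ := by
        rw [norm_pos_iff, sub_ne_zero]
        intro heq
        have := hinj hp0K.1.2 hp0K.1.1 heq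
        have h2 : εm ≤ p0.2 - p0.1 := hp0K.2
        rw [this] at h2
        linarith
      refine ⟨‖γ p0.2 - γ p0.1‖ / L, div_pos hμpos hL, fun x hx y hy hxy hfar => ?_⟩
      have hmem : (x, y) ∈ K := ⟨⟨hx, hy⟩, hfar⟩
      have := hp0min (x, y) hmem
      have hyx : y - x ≤ L := by
        have := hx.1; have := hy.2; linarith
      calc ‖γ p0.2 - γ p0.1‖ / L * (y - x) ≤ ‖γ p0.2 - γ p0.1‖ / L * L := by
            apply mul_le_mul_of_nonneg_left hyx (by positivity)
        _ = ‖γ p0.2 - γ p0.1‖ := by field_simp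
        _ ≤ ‖γ y - γ x‖ := this
    · refine ⟨1, one_pos, fun x hx y hy hxy hfar => ?_⟩
      exact absurd ⟨(x, y), ⟨⟨hx, hy⟩, hfar⟩⟩ hKne
  obtain ⟨c₂, hc₂, hfarB⟩ := hfar
  set c := min δm c₂ with hcdef
  have hc : 0 < c := lt_min hδm hc₂
  have hlow : ∀ x ∈ Icc (0:ℝ) L, ∀ y ∈ Icc (0:ℝ) L, x ≤ y → c * (y - x) ≤ ‖γ y - γ x‖ := by
    intro x hx y hy hxy
    rcases lt_or_ge (y - x) εm with h | h
    · calc c * (y - x) ≤ δm * (y - x) :=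
          mul_le_mul_of_nonneg_right (min_le_left _ _) (by linarith)
        _ ≤ ‖γ y - γ x‖ := near x hx y hy hxy h
    · calc c * (y - x) ≤ c₂ * (y - x) :=
          mul_le_mul_of_nonneg_right (min_le_right _ _) (by linarith)
        _ ≤ ‖γ y - γ x‖ := hfarB x hx y hy hxy h
  refine ⟨max 1 c⁻¹, le_max_left _ _, fun x hx y hy hxy => ?_⟩
  have hCinv : (max 1 c⁻¹)⁻¹ ≤ c := by
    have h1 : c⁻¹ ≤ max 1 c⁻¹ := le_max_right _ _
    have := inv_anti₀ (inv_pos.2 hc) h1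
    rwa [inv_inv] at this
  have hC1 : (1:ℝ) ≤ max 1 c⁻¹ := le_max_left _ _
  rcases le_total x y with hle | hle
  · have hlt : x < y := lt_of_le_of_ne hle hxy
    have habs : |x - y| = y - x := by rw [abs_sub_comm, abs_of_nonneg (by linarith)]
    have hnorm : ‖γ x - γ y‖ = ‖γ y - γ x‖ := norm_sub_rev _ _
    constructor
    · rw [habs, hnorm]
      calc (max 1 c⁻¹)⁻¹ * (y - x) ≤ c * (y - x) :=
          mul_le_mul_of_nonneg_right hCinv (by linarith)
        _ ≤ ‖γ y - γ x‖ := hlow x hx y hy hle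
    · rw [habs, hnorm]
      calc ‖γ y - γ x‖ ≤ y - x := hupper x hx y hy hle
        _ ≤ max 1 c⁻¹ * (y - x) := le_mul_of_one_le_left (by linarith) hC1
  · have hlt : y < x := lt_of_le_of_ne hle (Ne.symm hxy)
    have habs : |x - y| = x - y := abs_of_nonneg (by linarith)
    constructor
    · rw [habs]
      calc (max 1 c⁻¹)⁻¹ * (x - y) ≤ c * (x - y) :=
          mul_le_mul_of_nonneg_right hCinv (by linarith)
        _ ≤ ‖γ x - γ y‖ := hlow y hy x hx hle
    · rw [habs]
      calc ‖γ x - γ y‖ ≤ x - y := hupper y hy x hx hle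
        _ ≤ max 1 c⁻¹ * (x - y) := le_mul_of_one_le_left (by linarith) hC1
end

section
/- Let a = z_0 < z_1 < … < z_n = b be a partition of the interval [a,b] and define the node patches ω_0 := [z_0, z_1], ω_j := [z_{j−1}, z_{j+1}] for 1 ≤ j ≤ n−1, and ω_n := [z_{n−1}, z_n]. Then for every u ∈ L²([a,b]) with ‖u‖_{H^{1/2}([a,b])} < ∞ it holds Σ_{j=0}^{n} |u|²_{H^{1/2}(ω_j)} ≤ 2 ‖u‖²_{H^{1/2}([a,b])}. -/
open Set MeasureTheory

/-- Squared Sobolev–Slobodeckij seminorm `|u|_{H^{1/2}(s)}²`. -/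
noncomputable def sobSemiSq (u : ℝ → ℝ) (s : Set ℝ) : ENNReal :=
  ∫⁻ x in s, ∫⁻ y in s, ENNReal.ofReal ((u x - u y) ^ 2 / (x - y) ^ 2)

/-- Squared `L²` norm `‖u‖_{L²(s)}²`. -/
noncomputable def l2Sq (u : ℝ → ℝ) (s : Set ℝ) : ENNReal :=
  ∫⁻ x in s, ENNReal.ofReal ((u x) ^ 2)

/-- Squared Sobolev–Slobodeckij norm `‖u‖_{H^{1/2}(s)}²`. -/
noncomputable def h12Sq (u : ℝ → ℝ) (s : Set ℝ) : ENNReal :=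
  l2Sq u s + sobSemiSq u s

/-- Sum of lower integrals is at most the lower integral of the sum
(no measurability needed). -/
lemma sum_lintegral_le {α : Type*} [MeasurableSpace α] (μ : Measure α)
    (s : Finset ℕ) (f : ℕ → α → ENNReal) :
    ∑ j ∈ s, ∫⁻ x, f j x ∂μ ≤ ∫⁻ x, ∑ j ∈ s, f j x ∂μ := by
  classical
  induction s using Finset.cons_induction with
  | empty => simp
  | cons a s hnot ih =>
    simp only [Finset.sum_cons]
    calc (∫⁻ x, f a x ∂μ) + ∑ j ∈ s, ∫⁻ x, f j x ∂μ
        ≤ (∫⁻ x, f a x ∂μ) + ∫⁻ x, ∑ j ∈ s, f j x ∂μ := add_le_add (le_refl _) ih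
      _ ≤ ∫⁻ x, f a x + ∑ j ∈ s, f j x ∂μ := le_lintegral_add _ _

/-- Efficiency estimate: the sum of the local Faermann seminorm contributions over
all overlapping node patches is bounded by twice the global `H^{1/2}`-norm. -/
theorem sum_patch_seminorm_le_two_h12Sq
    (a b : ℝ) (n : ℕ) (hn : 1 ≤ n) (z : ℕ → ℝ)
    (hza : z 0 = a) (hzb : z n = b) (hz : ∀ j < n, z j < z (j + 1))
    (u : ℝ → ℝ) (hu : MemLp u 2 (volume.restrict (Icc a b)))
    (hfin : h12Sq u (Icc a b) < ⊤) :
    ∑ j ∈ Finset.range (n + 1), sobSemiSq u (Icc (z (j - 1)) (z (min (j + 1) n)))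
      ≤ 2 * h12Sq u (Icc a b) := by
  classical
  -- the integrand
  set F : ℝ → ℝ → ENNReal :=
    fun x y => ENNReal.ofReal ((u x - u y) ^ 2 / (x - y) ^ 2) with hF
  -- monotonicity of the nodes
  have hzmono : ∀ i k, i ≤ k → k ≤ n → z i ≤ z k := by
    intro i k hik hkn
    induction k with
    | zero => simp_all
    | succ m ih =>
      rcases Nat.lt_or_ge i (m + 1) with h | h
      · have : z i ≤ z m := ih (Nat.lt_succ_iff.mp h) (Nat.le_of_succ_le hkn)
        exact this.trans (hz m (Nat.lt_of_succ_le hkn)).le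
      · have : i = m + 1 := le_antisymm hik h
        simp [this]
  -- the half-open patches
  set ω : ℕ → Set ℝ := fun j => Ico (z (j - 1)) (z (min (j + 1) n)) with hω
  have hωsub : ∀ j, j ≤ n → ω j ⊆ Ico a b := by
    intro j hj
    refine Ico_subset_Ico ?_ ?_
    · rw [← hza]; exact hzmono 0 (j - 1) (Nat.zero_le _) ((Nat.sub_le j 1).trans hj)
    · rw [← hzb]; exact hzmono (min (j + 1) n) n (min_le_right _ _) le_rfl
  -- Icc and Ico give the same integrals
  have hrestr : ∀ c d : ℝ, (volume : Measure ℝ).restrict (Icc c d)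
      = (volume : Measure ℝ).restrict (Ico c d) :=
    fun c d => (Measure.restrict_congr_set Ico_ae_eq_Icc).symm
  have hsob : ∀ c d : ℝ, sobSemiSq u (Icc c d)
      = ∫⁻ x in Ico c d, ∫⁻ y in Ico c d, F x y := by
    intro c d
    rw [sobSemiSq, hrestr c d]
  -- indicator of a patch in x (with value 1)
  set c : ℕ → ℝ → ENNReal := fun j x => if x ∈ ω j then 1 else 0 with hc
  -- multiplicity bound: each point lies in at most two patches
  have hmult : ∀ x : ℝ, ∑ j ∈ Finset.range (n + 1), c j x ≤ 2 := by
    intro x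
    have key : ∀ j k, j ∈ Finset.range (n + 1) → k ∈ Finset.range (n + 1) →
        x ∈ ω j → x ∈ ω k → j + 2 ≤ k → False := by
      intro j k _ hk hxj hxk hjk
      have h1 : x < z (min (j + 1) n) := hxj.2
      have h2 : z (k - 1) ≤ x := hxk.1
      have hkn : k ≤ n := Nat.lt_succ_iff.mp (Finset.mem_range.mp hk)
      have hle : min (j + 1) n ≤ k - 1 := le_trans (min_le_left _ _) (by omega)
      have := hzmono _ _ hle (le_trans (Nat.sub_le k 1) hkn)
      linarith
    set s := (Finset.range (n + 1)).filter (fun j => x ∈ ω j) with hs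
    have hsum : ∑ j ∈ Finset.range (n + 1), c j x = (s.card : ENNReal) := by
      simp only [hc]; rw [Finset.sum_boole]
    rw [hsum]
    rcases s.eq_empty_or_nonempty with he | hne
    · simp [he]
    · have hm := s.min'_mem hne
      have hsub : s ⊆ {s.min' hne, s.min' hne + 1} := by
        intro j hj
        have hmj : s.min' hne ≤ j := s.min'_le j hj
        have hmmem := Finset.mem_filter.mp hm
        have hjmem := Finset.mem_filter.mp hj
        by_contra hcon
        simp only [Finset.mem_insert, Finset.mem_singleton] at hcon
        push_neg at hcon
        exact key _ _ hmmem.1 hjmem.1 hmmem.2 hjmem.2 (by omega)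
      calc (s.card : ENNReal) ≤ (({s.min' hne, s.min' hne + 1} : Finset ℕ).card : ENNReal) := by
            exact_mod_cast Finset.card_le_card hsub
        _ ≤ 2 := by
            exact_mod_cast (Finset.card_insert_le _ _).trans (by simp)
  -- rewrite each patch seminorm
  have hpatch : ∀ j ∈ Finset.range (n + 1),
      sobSemiSq u (Icc (z (j - 1)) (z (min (j + 1) n)))
        = ∫⁻ x, (ω j).indicator (fun x => ∫⁻ y in ω j, F x y) x := by
    intro j _
    rw [hsob, lintegral_indicator measurableSet_Ico]
  calc ∑ j ∈ Finset.range (n + 1), sobSemiSq u (Icc (z (j - 1)) (z (min (j + 1) n)))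
      = ∑ j ∈ Finset.range (n + 1),
          ∫⁻ x, (ω j).indicator (fun x => ∫⁻ y in ω j, F x y) x := Finset.sum_congr rfl hpatch
    _ ≤ ∫⁻ x, ∑ j ∈ Finset.range (n + 1),
          (ω j).indicator (fun x => ∫⁻ y in ω j, F x y) x := sum_lintegral_le _ _ _
    _ ≤ ∫⁻ x, (Ico a b).indicator (fun x => 2 * ∫⁻ y in Ico a b, F x y) x := by
        refine lintegral_mono fun x => ?_
        by_cases hx : x ∈ Ico a b
        · rw [indicator_of_mem hx]
          have step1 : ∀ j ∈ Finset.range (n + 1),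
              (ω j).indicator (fun x => ∫⁻ y in ω j, F x y) x
                = ∫⁻ y, c j x * (ω j).indicator (F x) y := by
            intro j _
            rw [lintegral_const_mul' _ _ (show (if x ∈ ω j then (1:ENNReal) else 0) ≠ ⊤ by split <;> simp),
              lintegral_indicator measurableSet_Ico]
            by_cases hxj : x ∈ ω j
            · rw [indicator_of_mem hxj]; simp [hxj]; rfl
            · rw [indicator_of_notMem hxj]; simp [hxj]
          rw [Finset.sum_congr rfl step1]
          calc ∑ j ∈ Finset.range (n + 1), ∫⁻ y, c j x * (ω j).indicator (F x) y
              ≤ ∫⁻ y, ∑ j ∈ Finset.range (n + 1), c j x * (ω j).indicator (F x) y :=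
                sum_lintegral_le _ _ _
            _ ≤ ∫⁻ y, 2 * (Ico a b).indicator (F x) y := by
                refine lintegral_mono fun y => ?_
                by_cases hy : y ∈ Ico a b
                · rw [indicator_of_mem hy]
                  calc ∑ j ∈ Finset.range (n + 1), c j x * (ω j).indicator (F x) y
                      ≤ ∑ j ∈ Finset.range (n + 1), c j x * F x y := by
                        refine Finset.sum_le_sum fun j _ => ?_
                        exact mul_le_mul_right (indicator_le_self _ _ y) _
                    _ = (∑ j ∈ Finset.range (n + 1), c j x) * F x y := by
                        rw [Finset.sum_mul]
                    _ ≤ 2 * F x y := mul_le_mul_left (hmult x) _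
                · have : ∀ j ∈ Finset.range (n + 1),
                      c j x * (ω j).indicator (F x) y = 0 := by
                    intro j hj
                    have : y ∉ ω j := fun h =>
                      hy (hωsub j (Nat.lt_succ_iff.mp (Finset.mem_range.mp hj)) h)
                    rw [indicator_of_notMem this, mul_zero]
                  rw [Finset.sum_congr rfl this]
                  simp
            _ = 2 * ∫⁻ y in Ico a b, F x y := by
                rw [lintegral_const_mul' _ _ (by norm_num),
                  lintegral_indicator measurableSet_Ico]
        · rw [indicator_of_notMem hx]
          have : ∀ j ∈ Finset.range (n + 1),
              (ω j).indicator (fun x => ∫⁻ y in ω j, F x y) x = 0 := by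
            intro j hj
            have : x ∉ ω j := fun h =>
              hx (hωsub j (Nat.lt_succ_iff.mp (Finset.mem_range.mp hj)) h)
            rw [indicator_of_notMem this]
          rw [Finset.sum_congr rfl this]
          simp
    _ = 2 * sobSemiSq u (Icc a b) := by
        rw [lintegral_indicator measurableSet_Ico, hsob,
          lintegral_const_mul' _ _ (by norm_num)]
    _ ≤ 2 * h12Sq u (Icc a b) := mul_le_mul_right le_add_self _
end

section
/- Let I ⊂ ℝ be a finite interval with positive length |I| > 0. Then for every u ∈ L²(I) it holds ‖u‖²_{L²(I)} ≤ (|I|/2) · |u|²_{H^{1/2}(I)} + (1/|I|) · | ∫_I u(t) dt |². -/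
open Set MeasureTheory

/-- Poincaré-type inequality on a finite interval (Lemma 3.4). -/
theorem poincare_type_inequality
    (a b : ℝ) (hab : a < b) (u : ℝ → ℝ)
    (hu : MemLp u 2 (volume.restrict (Icc a b))) :
    l2Sq u (Icc a b)
      ≤ ENNReal.ofReal ((b - a) / 2) * sobSemiSq u (Icc a b)
        + ENNReal.ofReal ((1 / (b - a)) * (∫ t in Icc a b, u t) ^ 2) := by
  set μ := volume.restrict (Icc a b) with hμ
  have hL : (0:ℝ) < b - a := sub_pos.mpr hab
  set L : ℝ := b - a with hLdef
  have hμuniv : μ Set.univ = ENNReal.ofReal L := by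
    simp [hμ, Real.volume_Icc, hLdef]
  haveI : IsFiniteMeasure μ := ⟨by rw [hμuniv]; exact ENNReal.ofReal_lt_top⟩
  have hmeasμ : (μ Set.univ).toReal = L := by
    rw [hμuniv]; exact ENNReal.toReal_ofReal hL.le
  have hu1 : Integrable u μ := hu.integrable one_le_two
  have hu2 : Integrable (fun x => (u x) ^ 2) μ := hu.integrable_sq
  set T : ℝ := ∫ t, u t ∂μ with hT
  set C : ℝ := ∫ t, (u t) ^ 2 ∂μ with hC
  -- inner integral computation
  have hinteg : ∀ x : ℝ, Integrable (fun y => (u x - u y) ^ 2) μ := by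
    intro x
    have h1 : Integrable (fun y => (u x) ^ 2 + (u y) ^ 2 - 2 * u x * u y) μ :=
      ((integrable_const _).add hu2).sub (hu1.const_mul _)
    refine h1.congr (ae_of_all _ fun y => by ring)
  have key : ∀ x : ℝ, ∫ y, (u x - u y) ^ 2 ∂μ = L * (u x) ^ 2 + C - 2 * u x * T := by
    intro x
    have h2 : (fun y => (u x - u y) ^ 2)
        = fun y => (u x) ^ 2 + (u y) ^ 2 - 2 * u x * u y := by
      funext y; ring
    have ha : Integrable (fun y => (u x) ^ 2 + (u y) ^ 2) μ := (integrable_const _).add hu2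
    have hb : Integrable (fun y => 2 * u x * u y) μ := hu1.const_mul _
    rw [h2, integral_sub ha hb, integral_add (integrable_const _) hu2, integral_const,
      integral_const_mul, measureReal_def, hmeasμ, smul_eq_mul]
  have keyL : ∀ x : ℝ, (∫⁻ y, ENNReal.ofReal ((u x - u y) ^ 2) ∂μ)
      = ENNReal.ofReal (L * (u x) ^ 2 + C - 2 * u x * T) := by
    intro x
    rw [← key x,
      ← ofReal_integral_eq_lintegral_ofReal (hinteg x) (ae_of_all _ fun y => sq_nonneg _)]
  -- outer integral computation
  have hg0 : ∀ x, 0 ≤ L * (u x) ^ 2 + C - 2 * u x * T := by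
    intro x; rw [← key x]; exact integral_nonneg fun y => sq_nonneg _
  have hgint : Integrable (fun x => L * (u x) ^ 2 + C - 2 * u x * T) μ :=
    ((hu2.const_mul L).add (integrable_const C)).sub ((hu1.const_mul 2).mul_const T)
  have hgval : ∫ x, (L * (u x) ^ 2 + C - 2 * u x * T) ∂μ = 2 * L * C - 2 * T ^ 2 := by
    have ha : Integrable (fun x => L * (u x) ^ 2 + C) μ := (hu2.const_mul L).add (integrable_const C)
    have hb : Integrable (fun x => 2 * u x * T) μ := (hu1.const_mul 2).mul_const T
    rw [integral_sub ha hb, integral_add (hu2.const_mul L) (integrable_const C), integral_const,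
      integral_const_mul, integral_mul_const, integral_const_mul, measureReal_def, hmeasμ, smul_eq_mul]
    ring
  have hnn : (0:ℝ) ≤ 2 * L * C - 2 * T ^ 2 := hgval ▸ integral_nonneg hg0
  have hdouble : (∫⁻ x, ∫⁻ y, ENNReal.ofReal ((u x - u y) ^ 2) ∂μ ∂μ)
      = ENNReal.ofReal (2 * L * C - 2 * T ^ 2) := by
    rw [lintegral_congr keyL,
      ← ofReal_integral_eq_lintegral_ofReal hgint (ae_of_all _ hg0), hgval]
  have hl2 : l2Sq u (Icc a b) = ENNReal.ofReal C := by
    rw [l2Sq, hC,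
      ofReal_integral_eq_lintegral_ofReal hu2 (ae_of_all _ fun x => sq_nonneg _)]
  -- pointwise bound and sobolev seminorm bound
  have hptwise : ∀ x ∈ Icc a b, ∀ y ∈ Icc a b,
      (u x - u y) ^ 2 ≤ L ^ 2 * ((u x - u y) ^ 2 / (x - y) ^ 2) := by
    intro x hx y hy
    rcases eq_or_ne x y with h | h
    · simp [h]
    · have hd : (0:ℝ) < (x - y) ^ 2 := by
        have := sub_ne_zero.mpr h; positivity
      have hle : (x - y) ^ 2 ≤ L ^ 2 := by
        have h1 : |x - y| ≤ b - a := by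
          rw [abs_sub_le_iff]
          constructor <;> [linarith [hx.1, hx.2, hy.1, hy.2]; linarith [hx.1, hx.2, hy.1, hy.2]]
        calc (x - y) ^ 2 = |x - y| ^ 2 := (sq_abs _).symm
          _ ≤ (b - a) ^ 2 := by
            exact pow_le_pow_left₀ (abs_nonneg _) h1 2
          _ = L ^ 2 := rfl
      rw [mul_div_assoc', le_div_iff₀ hd]
      nlinarith [sq_nonneg (u x - u y)]
  have hsob : ENNReal.ofReal (2 * L * C - 2 * T ^ 2)
      ≤ ENNReal.ofReal (L ^ 2) * sobSemiSq u (Icc a b) := by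
    rw [← hdouble, sobSemiSq,
      ← lintegral_const_mul' _ _ ENNReal.ofReal_ne_top]
    refine setLIntegral_mono' measurableSet_Icc fun x hx => ?_
    rw [← lintegral_const_mul' _ _ ENNReal.ofReal_ne_top]
    refine le_trans (le_of_eq rfl) (setLIntegral_mono' measurableSet_Icc fun y hy => ?_)
    rw [← ENNReal.ofReal_mul (by positivity)]
    exact ENNReal.ofReal_le_ofReal (hptwise x hx y hy)
  -- conclude
  rw [hl2]
  have h2L0 : ENNReal.ofReal (2 * L) ≠ 0 :=
    ne_of_gt (ENNReal.ofReal_pos.mpr (by positivity))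
  rw [← ENNReal.mul_le_mul_iff_right h2L0 ENNReal.ofReal_ne_top]
  calc ENNReal.ofReal (2 * L) * ENNReal.ofReal C
      = ENNReal.ofReal (2 * L * C - 2 * T ^ 2) + ENNReal.ofReal (2 * T ^ 2) := by
        rw [← ENNReal.ofReal_mul (by positivity), ← ENNReal.ofReal_add hnn (by positivity)]
        congr 1; ring
    _ ≤ ENNReal.ofReal (L ^ 2) * sobSemiSq u (Icc a b) + ENNReal.ofReal (2 * T ^ 2) :=
        add_le_add_left hsob _
    _ = ENNReal.ofReal (2 * L) * (ENNReal.ofReal (L / 2) * sobSemiSq u (Icc a b)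
          + ENNReal.ofReal ((1 / L) * T ^ 2)) := by
        rw [mul_add, ← mul_assoc, ← ENNReal.ofReal_mul (by positivity),
          ← ENNReal.ofReal_mul (by positivity)]
        congr 2
        · ring
        · field_simp
end

section
/- Let I ⊂ ℝ be a finite interval with |I| > 0, let q ∈ (0,1], and let ψ ∈ L²(I) satisfy ‖1 − ψ‖²_{L²(I)} ≤ (1 − q)|I|. If u ∈ L²(I) satisfies the orthogonality ∫_I u(t) ψ(t) dt = 0, then ‖u‖²_{L²(I)} ≤ (|I| / (2q)) · |u|²_{H^{1/2}(I)}. -/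
open Set MeasureTheory

/-- Local `L²` bound from orthogonality against a bump function `ψ` with mass
condition `‖1 − ψ‖²_{L²(I)} ≤ (1 − q)|I|` (key step in Lemma 3.5). -/
theorem l2_bound_of_orthogonality
    (a b : ℝ) (hab : a < b) (q : ℝ) (hq0 : 0 < q) (hq1 : q ≤ 1)
    (ψ : ℝ → ℝ) (hψ : MemLp ψ 2 (volume.restrict (Icc a b)))
    (hmass : l2Sq (fun t => 1 - ψ t) (Icc a b) ≤ ENNReal.ofReal ((1 - q) * (b - a)))
    (u : ℝ → ℝ) (hu : MemLp u 2 (volume.restrict (Icc a b)))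
    (horth : (∫ t in Icc a b, u t * ψ t) = 0) :
    l2Sq u (Icc a b) ≤ ENNReal.ofReal ((b - a) / (2 * q)) * sobSemiSq u (Icc a b) := by
  set μ := volume.restrict (Icc a b) with hμ
  have hI : (0:ℝ) < b - a := sub_pos.mpr hab
  haveI : IsFiniteMeasure μ := ⟨by
    rw [hμ, Measure.restrict_apply_univ, Real.volume_Icc]
    exact ENNReal.ofReal_lt_top⟩
  have husq : Integrable (fun x => u x ^ 2) μ := hu.integrable_sq
  have hu1 : Integrable u μ := hu.integrable one_le_two
  have hψ1m : MemLp (fun t => 1 - ψ t) 2 μ := (memLp_const 1).sub hψ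
  have hsq : Integrable (fun x => (1 - ψ x) ^ 2) μ := hψ1m.integrable_sq
  have huψ : Integrable (fun t => u t * ψ t) μ := by
    have h : MemLp (ψ • u) 1 μ := hu.smul hψ (hpqr := ⟨by
      rw [inv_one, ENNReal.inv_two_add_inv_two]⟩)
    exact (memLp_one_iff_integrable.mp h).congr (Filter.Eventually.of_forall fun t => by
      simp [Pi.smul_apply, smul_eq_mul, mul_comm])
  set M := ∫ x, u x ^ 2 ∂μ with hMdef
  set m := ∫ x, u x ∂μ with hmdef
  have hM0 : 0 ≤ M := integral_nonneg fun x => sq_nonneg _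
  -- l2Sq u = ofReal M
  have hl2 : l2Sq u (Icc a b) = ENNReal.ofReal M := by
    rw [l2Sq, hMdef, ofReal_integral_eq_lintegral_ofReal husq
      (Filter.Eventually.of_forall fun x => sq_nonneg _)]
  -- mass bound in ℝ
  set N := ∫ x, (1 - ψ x) ^ 2 ∂μ with hNdef
  have hN0 : 0 ≤ N := integral_nonneg fun x => sq_nonneg _
  have hNle : N ≤ (1 - q) * (b - a) := by
    have h1 : l2Sq (fun t => 1 - ψ t) (Icc a b) = ENNReal.ofReal N := by
      rw [l2Sq, hNdef, ofReal_integral_eq_lintegral_ofReal hsq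
        (Filter.Eventually.of_forall fun x => sq_nonneg _)]
    rw [h1] at hmass
    exact (ENNReal.ofReal_le_ofReal_iff
      (mul_nonneg (by linarith) hI.le)).mp hmass
  -- orthogonality: m = ∫ u (1-ψ)
  have hm_eq : m = ∫ x, u x * (1 - ψ x) ∂μ := by
    have h : (fun x => u x * (1 - ψ x)) = fun x => u x - u x * ψ x := by
      funext x; ring
    rw [h, integral_sub hu1 huψ, hμ, horth, sub_zero, hmdef]
  -- Cauchy–Schwarz: m^2 ≤ M * N
  have hCS : m ^ 2 ≤ M * N := by
    have hpq : (2:ℝ).HolderConjugate 2 := Real.holderConjugate_iff.mpr ⟨one_lt_two, by norm_num⟩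
    have hua : MemLp (fun x => |u x|) (ENNReal.ofReal 2) μ := by
      simpa [ENNReal.ofReal_ofNat] using hu.norm
    have hψa : MemLp (fun x => |1 - ψ x|) (ENNReal.ofReal 2) μ := by
      simpa [ENNReal.ofReal_ofNat] using hψ1m.norm
    have hH := integral_mul_le_Lp_mul_Lq_of_nonneg hpq
      (Filter.Eventually.of_forall fun x => abs_nonneg (u x) :
        (0:ℝ → ℝ) ≤ᵐ[μ] fun x => |u x|)
      (Filter.Eventually.of_forall fun x => abs_nonneg (1 - ψ x) :
        (0:ℝ → ℝ) ≤ᵐ[μ] fun x => |1 - ψ x|)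
      hua hψa
    have habs2 : ∀ c : ℝ, |c| ^ (2:ℝ) = c ^ 2 := fun c => by
      rw [show (2:ℝ) = ((2:ℕ):ℝ) by norm_num, Real.rpow_natCast, sq_abs]
    have hHa : ∫ x, |u x| * |1 - ψ x| ∂μ ≤ M ^ ((1:ℝ)/2) * N ^ ((1:ℝ)/2) := by
      have e1 : ∫ x, |u x| ^ (2:ℝ) ∂μ = M := by
        rw [hMdef]; exact integral_congr_ae (Filter.Eventually.of_forall fun x => habs2 _)
      have e2 : ∫ x, |1 - ψ x| ^ (2:ℝ) ∂μ = N := by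
        rw [hNdef]; exact integral_congr_ae (Filter.Eventually.of_forall fun x => habs2 _)
      calc ∫ x, |u x| * |1 - ψ x| ∂μ
          ≤ (∫ x, |u x| ^ (2:ℝ) ∂μ) ^ ((1:ℝ)/2) * (∫ x, |1 - ψ x| ^ (2:ℝ) ∂μ) ^ ((1:ℝ)/2) := hH
        _ = M ^ ((1:ℝ)/2) * N ^ ((1:ℝ)/2) := by rw [e1, e2]
    have hmabs : |m| ≤ M ^ ((1:ℝ)/2) * N ^ ((1:ℝ)/2) := by
      calc |m| = |∫ x, u x * (1 - ψ x) ∂μ| := by rw [hm_eq]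
        _ ≤ ∫ x, |u x * (1 - ψ x)| ∂μ := by
            simpa only [Real.norm_eq_abs] using
              norm_integral_le_integral_norm (μ := μ) fun x => u x * (1 - ψ x)
        _ = ∫ x, |u x| * |1 - ψ x| ∂μ := by
            refine integral_congr_ae (Filter.Eventually.of_forall fun x => ?_)
            simp [abs_mul]
        _ ≤ _ := hHa
    have hrhs : (M ^ ((1:ℝ)/2) * N ^ ((1:ℝ)/2)) ^ 2 = M * N := by
      rw [mul_pow, ← Real.rpow_natCast (M ^ ((1:ℝ)/2)) 2, ← Real.rpow_natCast (N ^ ((1:ℝ)/2)) 2,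
        ← Real.rpow_mul hM0, ← Real.rpow_mul hN0]
      norm_num
    calc m ^ 2 = |m| ^ 2 := (sq_abs m).symm
      _ ≤ (M ^ ((1:ℝ)/2) * N ^ ((1:ℝ)/2)) ^ 2 :=
          pow_le_pow_left₀ (abs_nonneg m) hmabs 2
      _ = M * N := hrhs
  have hm2 : m ^ 2 ≤ (1 - q) * (b - a) * M := by
    calc m ^ 2 ≤ M * N := hCS
      _ ≤ M * ((1 - q) * (b - a)) := mul_le_mul_of_nonneg_left hNle hM0
      _ = (1 - q) * (b - a) * M := by ring
  -- double integral identity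
  have hC : ∫ _x, (1:ℝ) ∂μ = b - a := by
    rw [integral_const, smul_eq_mul, mul_one, hμ, measureReal_restrict_apply_univ, measureReal_def,
      Real.volume_Icc, ENNReal.toReal_ofReal hI.le]
  have h1 : Integrable (fun p : ℝ × ℝ => u p.1 ^ 2 * 1) (μ.prod μ) :=
    husq.mul_prod (integrable_const 1)
  have h2 : Integrable (fun p : ℝ × ℝ => u p.1 * u p.2) (μ.prod μ) :=
    hu1.mul_prod hu1
  have h3 : Integrable (fun p : ℝ × ℝ => (1:ℝ) * u p.2 ^ 2) (μ.prod μ) :=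
    (integrable_const 1).mul_prod husq
  have hDint : Integrable (fun p : ℝ × ℝ => (u p.1 - u p.2) ^ 2) (μ.prod μ) := by
    refine (((h1.sub (h2.const_mul 2)).add h3).congr
      (Filter.Eventually.of_forall fun p => ?_))
    simp only [Pi.add_apply, Pi.sub_apply]
    ring
  set D := ∫ p, (u p.1 - u p.2) ^ 2 ∂(μ.prod μ) with hDdef
  have hDval : D = 2 * (b - a) * M - 2 * m ^ 2 := by
    have h : D = (∫ p, u p.1 ^ 2 * 1 ∂(μ.prod μ)) - 2 * (∫ p, u p.1 * u p.2 ∂(μ.prod μ))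
        + (∫ p, (1:ℝ) * u p.2 ^ 2 ∂(μ.prod μ)) := by
      have h12 : Integrable (fun p : ℝ × ℝ => u p.1 ^ 2 * 1 - 2 * (u p.1 * u p.2))
          (μ.prod μ) := h1.sub (h2.const_mul 2)
      rw [hDdef, ← integral_const_mul, ← integral_sub h1 (h2.const_mul 2),
        ← integral_add h12 h3]
      exact integral_congr_ae (Filter.Eventually.of_forall fun p => by
        simp only [Pi.add_apply, Pi.sub_apply]; ring)
    rw [h, integral_prod_mul (fun x => u x ^ 2) (fun _ => (1:ℝ)),
      integral_prod_mul u u, integral_prod_mul (fun _ => (1:ℝ)) (fun y => u y ^ 2), hC,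
      ← hMdef, ← hmdef]
    ring
  -- convert double integral to iterated lintegral
  have haem : AEMeasurable (fun p : ℝ × ℝ => ENNReal.ofReal ((u p.1 - u p.2) ^ 2)) (μ.prod μ) := by
    have h : AEStronglyMeasurable (fun p : ℝ × ℝ => (u p.1 - u p.2) ^ 2) (μ.prod μ) :=
      ((hu.1.comp_fst.sub hu.1.comp_snd).pow 2)
    exact h.aemeasurable.ennreal_ofReal
  have hT : (∫⁻ x in Icc a b, ∫⁻ y in Icc a b, ENNReal.ofReal ((u x - u y) ^ 2))
      = ENNReal.ofReal D := by
    rw [hDdef, ofReal_integral_eq_lintegral_ofReal hDint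
      (Filter.Eventually.of_forall fun p => sq_nonneg _), lintegral_prod _ haem]
  -- comparison with sobSemiSq
  set A := sobSemiSq u (Icc a b) with hAdef
  have hTA : ENNReal.ofReal D ≤ ENNReal.ofReal ((b - a) ^ 2) * A := by
    rw [← hT, hAdef, sobSemiSq]
    have key : ∀ x ∈ Icc a b, (∫⁻ y in Icc a b, ENNReal.ofReal ((u x - u y) ^ 2))
        ≤ ENNReal.ofReal ((b - a) ^ 2) *
          ∫⁻ y in Icc a b, ENNReal.ofReal ((u x - u y) ^ 2 / (x - y) ^ 2) := by
      intro x hx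
      rw [← lintegral_const_mul' _ _ ENNReal.ofReal_ne_top]
      refine lintegral_mono_ae ((ae_restrict_iff' measurableSet_Icc).mpr
        (Filter.Eventually.of_forall fun y hy => ?_))
      rw [← ENNReal.ofReal_mul (sq_nonneg (b - a))]
      apply ENNReal.ofReal_le_ofReal
      rcases eq_or_ne x y with h | h
      · rw [h]
        simp
      · have hxy : (x - y) ^ 2 ≤ (b - a) ^ 2 := by
          have hb1 : x - y ≤ b - a := by
            have := hx.2; have := hy.1; linarith
          have hb2 : -(b - a) ≤ x - y := by
            have := hx.1; have := hy.2; linarith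
          exact sq_le_sq' hb2 hb1
        have hne : (x - y) ^ 2 ≠ 0 := pow_ne_zero 2 (sub_ne_zero.mpr h)
        calc (u x - u y) ^ 2 = (u x - u y) ^ 2 / (x - y) ^ 2 * (x - y) ^ 2 := by
              field_simp
          _ ≤ (u x - u y) ^ 2 / (x - y) ^ 2 * (b - a) ^ 2 :=
              mul_le_mul_of_nonneg_left hxy (by positivity)
          _ = (b - a) ^ 2 * ((u x - u y) ^ 2 / (x - y) ^ 2) := by ring
    calc (∫⁻ x in Icc a b, ∫⁻ y in Icc a b, ENNReal.ofReal ((u x - u y) ^ 2))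
        ≤ ∫⁻ x in Icc a b, ENNReal.ofReal ((b - a) ^ 2) *
            ∫⁻ y in Icc a b, ENNReal.ofReal ((u x - u y) ^ 2 / (x - y) ^ 2) := by
          refine lintegral_mono_ae ((ae_restrict_iff' measurableSet_Icc).mpr
            (Filter.Eventually.of_forall fun x hx => key x hx))
      _ = ENNReal.ofReal ((b - a) ^ 2) * ∫⁻ x in Icc a b,
            ∫⁻ y in Icc a b, ENNReal.ofReal ((u x - u y) ^ 2 / (x - y) ^ 2) :=
          lintegral_const_mul' _ _ ENNReal.ofReal_ne_top
  -- final assembly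
  rcases eq_or_ne A ⊤ with hAtop | hAfin
  · rw [hl2, hAtop, ENNReal.mul_top (by
      simp only [ne_eq, ENNReal.ofReal_eq_zero, not_le]
      positivity)]
    exact le_top
  · set Ar := A.toReal with hArdef
    have hAr0 : 0 ≤ Ar := ENNReal.toReal_nonneg
    have hAeq : A = ENNReal.ofReal Ar := (ENNReal.ofReal_toReal hAfin).symm
    have hDle : D ≤ (b - a) ^ 2 * Ar := by
      have h : ENNReal.ofReal D ≤ ENNReal.ofReal ((b - a) ^ 2 * Ar) := by
        rw [ENNReal.ofReal_mul (sq_nonneg _), ← hAeq]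
        exact hTA
      exact (ENNReal.ofReal_le_ofReal_iff (by positivity)).mp h
    have hMle : M ≤ (b - a) / (2 * q) * Ar := by
      rw [hDval] at hDle
      rw [div_mul_eq_mul_div, le_div_iff₀ (by positivity)]
      nlinarith [hm2, hDle, hM0, hI, hq0]
    rw [hl2, hAeq, ← ENNReal.ofReal_mul (by positivity)]
    exact ENNReal.ofReal_le_ofReal hMle
end

section
/- Let κ ≥ 1, ℓ ≥ 1, and let y_0 < y_1 < … < y_{ℓ+1} be real numbers such that consecutive gap lengths satisfy (y_{k+1} − y_k)/(y_k − y_{k−1}) ≤ κ and (y_k − y_{k−1})/(y_{k+1} − y_k) ≤ κ for all k = 1, …, ℓ. Then for every u ∈ L²([y_0, y_{ℓ+1}]) it holds |u|²_{H^{1/2}([y_0, y_{ℓ+1}])} ≤ (1 + 2κ)^{ℓ−1} · Σ_{k=1}^{ℓ} |u|²_{H^{1/2}([y_{k−1}, y_{k+1}])}. -/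
open Set MeasureTheory

noncomputable def K (u : ℝ → ℝ) (x y : ℝ) : ENNReal :=
  ENNReal.ofReal ((u x - u y) ^ 2 / (x - y) ^ 2)

noncomputable def Dint (u : ℝ → ℝ) (s t : Set ℝ) : ENNReal :=
  ∫⁻ x in s, ∫⁻ y in t, K u x y

lemma K_symm (u : ℝ → ℝ) (x y : ℝ) : K u x y = K u y x := by
  unfold K
  congr 1
  rw [show (u x - u y)^2 = (u y - u x)^2 by ring, show (x-y)^2 = (y-x)^2 by ring]

lemma measurable_K (u : ℝ → ℝ) (hu : Measurable u) :
    Measurable (Function.uncurry (K u)) := by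
  apply Measurable.ennreal_ofReal
  exact (((hu.comp measurable_fst).sub (hu.comp measurable_snd)).pow_const 2).div
    (((measurable_fst.sub measurable_snd)).pow_const 2)

lemma measurable_K_right (u : ℝ → ℝ) (hu : Measurable u) (x : ℝ) :
    Measurable (K u x) :=
  (measurable_K u hu).comp (measurable_const.prodMk measurable_id)

lemma measurable_Dint_inner (u : ℝ → ℝ) (hu : Measurable u) (t : Set ℝ) :
    Measurable (fun x => ∫⁻ y in t, K u x y) :=
  Measurable.lintegral_prod_right (measurable_K u hu)

lemma Dint_swap (u : ℝ → ℝ) (hu : Measurable u) (s t : Set ℝ) :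
    Dint u s t = Dint u t s := by
  unfold Dint
  rw [lintegral_lintegral_swap ((measurable_K u hu).aemeasurable)]
  simp_rw [fun y x => K_symm u x y]

lemma Dint_union_left (u : ℝ → ℝ) (s t r : Set ℝ) (ht : MeasurableSet t)
    (hst : Disjoint s t) : Dint u (s ∪ t) r = Dint u s r + Dint u t r :=
  lintegral_union ht hst

lemma Dint_union_right (u : ℝ → ℝ) (hu : Measurable u) (r s t : Set ℝ)
    (ht : MeasurableSet t) (hst : Disjoint s t) :
    Dint u r (s ∪ t) = Dint u r s + Dint u r t := by
  unfold Dint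
  rw [← lintegral_add_left (measurable_Dint_inner u hu s)]
  exact lintegral_congr fun x => lintegral_union ht hst




lemma lint_inv_sq (a f w : ℝ) (haf : a < f) (hfw : f < w) :
    ∫⁻ x in Ioc a f, ENNReal.ofReal (1 / (w - x)^2)
      = ENNReal.ofReal (1/(w-f) - 1/(w-a)) := by
  have hcont : ContinuousOn (fun x => 1 / (w - x)^2) (Icc a f) := by
    apply ContinuousOn.div continuousOn_const
    · fun_prop
    · intro x hx
      have hxw : 0 < w - x := by have := hx.2; linarith
      positivity
  have hint : IntegrableOn (fun x => 1 / (w - x)^2) (Ioc a f) :=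
    (hcont.integrableOn_Icc).mono_set Ioc_subset_Icc_self
  rw [← ofReal_integral_eq_lintegral_ofReal hint ?_]
  · congr 1
    rw [← intervalIntegral.integral_of_le haf.le]
    have h1 : ∫ x in a..f, 1 / (w - x)^2 = ∫ x in a..f, (fun t => t ^ (-2 : ℤ)) (w - x) := by
      apply intervalIntegral.integral_congr
      intro x _
      simp only [zpow_neg, one_div]
      norm_cast
    rw [h1, intervalIntegral.integral_comp_sub_left (fun t => t ^ (-2:ℤ)) w,
      integral_zpow]
    · norm_num
      ring
    · right
      refine ⟨by norm_num, ?_⟩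
      intro h
      have h1 : 0 < w - f := by linarith
      have h2 : 0 < w - a := by linarith
      simp only [Set.mem_uIcc] at h
      rcases h with h3 | h3 <;> linarith [h3.1, h3.2]
  · filter_upwards with x
    positivity

lemma meas_single {t : ℝ → ℝ → ℝ → ENNReal}
    (m : Measurable fun q : (ℝ × ℝ) × ℝ => t q.1.1 q.1.2 q.2) (x y : ℝ) :
    Measurable (fun z => t x y z) :=
  m.comp ((measurable_const.prodMk measurable_const).prodMk measurable_id)

lemma meas_double {t : ℝ → ℝ → ℝ → ENNReal}
    (m : Measurable fun q : (ℝ × ℝ) × ℝ => t q.1.1 q.1.2 q.2) (J : Set ℝ) (x : ℝ) :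
    Measurable (fun y => ∫⁻ z in J, t x y z) := by
  apply Measurable.lintegral_prod_right (f := fun y z => t x y z)
  exact m.comp ((measurable_const.prodMk measurable_fst).prodMk measurable_snd)

lemma meas_triple {t : ℝ → ℝ → ℝ → ENNReal}
    (m : Measurable fun q : (ℝ × ℝ) × ℝ => t q.1.1 q.1.2 q.2) (E J : Set ℝ) :
    Measurable (fun x => ∫⁻ y in E, ∫⁻ z in J, t x y z) := by
  apply Measurable.lintegral_prod_right (f := fun x y => ∫⁻ z in J, t x y z)
  have m' : Measurable (Function.uncurry (fun (p : ℝ × ℝ) z => t p.1 p.2 z)) := m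
  exact Measurable.lintegral_prod_right (f := fun (p : ℝ × ℝ) z => t p.1 p.2 z) m'

variable (u : ℝ → ℝ)


set_option maxHeartbeats 1000000 in
lemma cross_est (hu : Measurable u) (a f g e c₁ c₂ : ℝ) (haf : a < f) (hfg : f < g) (hge : g < e)
    (hc₁0 : 0 ≤ c₁) (hc₂0 : 0 ≤ c₂)
    (hc₁ : e - g ≤ c₁ * (g - f))
    (hc₂ : ∀ z, f ≤ z → z ≤ g → ∀ y, g < y → y ≤ e →
      (y - z)^2 * (1/(y-f) - 1/(y-a)) ≤ c₂ * (g - f)) :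
    Dint u (Ioc a f) (Ioc g e) ≤
      ENNReal.ofReal (2*c₁) * Dint u (Ioc a f) (Ioc f g)
      + ENNReal.ofReal (2*c₂) * Dint u (Ioc g e) (Ioc f g) := by
  set F := Ioc a f with hF
  set J := Ioc f g with hJ
  set E := Ioc g e with hE
  set t1 : ℝ → ℝ → ℝ → ENNReal :=
    fun x y z => ENNReal.ofReal (2*(u x - u z)^2/(y-x)^2) with ht1
  set t2 : ℝ → ℝ → ℝ → ENNReal :=
    fun x y z => ENNReal.ofReal (2*(u z - u y)^2/(y-x)^2) with ht2
  have mt1 : Measurable (fun q : (ℝ × ℝ) × ℝ => t1 q.1.1 q.1.2 q.2) :=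
    Measurable.ennreal_ofReal (by fun_prop)
  have mt2 : Measurable (fun q : (ℝ × ℝ) × ℝ => t2 q.1.1 q.1.2 q.2) :=
    Measurable.ennreal_ofReal (by fun_prop)
  have mK : Measurable (Function.uncurry (K u)) :=
    Measurable.ennreal_ofReal (by fun_prop)
  have mKx : ∀ x, Measurable (K u x) := fun x =>
    mK.comp (measurable_const.prodMk measurable_id)
  -- measurability of inner iterated integrals
  have mt1y : ∀ x, Measurable (fun y => ∫⁻ z in J, t1 x y z) := meas_double mt1 J
  have mt2y : ∀ x, Measurable (fun y => ∫⁻ z in J, t2 x y z) := meas_double mt2 J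
  have mt1xy : Measurable (fun x => ∫⁻ y in E, ∫⁻ z in J, t1 x y z) := meas_triple mt1 E J
  have mt2xy : Measurable (fun x => ∫⁻ y in E, ∫⁻ z in J, t2 x y z) := meas_triple mt2 E J
  have mDinner : ∀ (t : Set ℝ), Measurable (fun x => ∫⁻ y in t, K u x y) :=
    fun t => Measurable.lintegral_prod_right mK
  have hvolJ : volume J = ENNReal.ofReal (g - f) := Real.volume_Ioc
  have hgf0 : (0:ℝ) < g - f := by linarith
  -- Claim 1
  have claim1 : ENNReal.ofReal (g-f) * Dint u F E
      ≤ ∫⁻ x in F, ∫⁻ y in E, ∫⁻ z in J, (t1 x y z + t2 x y z) := by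
    rw [Dint, ← lintegral_const_mul _ (mDinner E)]
    apply setLIntegral_mono (meas_triple (t := fun x y z => t1 x y z + t2 x y z) (mt1.add mt2) E J)
    intro x hx
    rw [← lintegral_const_mul _ (mKx x)]
    apply setLIntegral_mono (meas_double (t := fun x y z => t1 x y z + t2 x y z) (mt1.add mt2) J x)
    intro y hy
    have hxy : (0:ℝ) < y - x := by
      have h1 : x ≤ f := hx.2
      have h2 : g < y := hy.1
      linarith
    calc ENNReal.ofReal (g-f) * K u x y
        = K u x y * volume J := by rw [hvolJ, mul_comm]
      _ = ∫⁻ _z in J, K u x y := (setLIntegral_const J _).symm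
      _ ≤ ∫⁻ z in J, (t1 x y z + t2 x y z) := by
          apply lintegral_mono
          intro z
          have hreal : (u x - u y)^2/(x-y)^2
              ≤ 2*(u x - u z)^2/(y-x)^2 + 2*(u z - u y)^2/(y-x)^2 := by
            rw [← add_div, show (x-y)^2 = (y-x)^2 by ring]
            apply div_le_div_of_nonneg_right ?_ (by positivity)
            nlinarith [sq_nonneg (u x + u y - 2 * u z)]
          calc K u x y ≤ ENNReal.ofReal (2*(u x - u z)^2/(y-x)^2 + 2*(u z - u y)^2/(y-x)^2) :=
                ENNReal.ofReal_le_ofReal hreal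
            _ = t1 x y z + t2 x y z := ENNReal.ofReal_add (by positivity) (by positivity)
  -- Claim 2
  have claim2 : (∫⁻ x in F, ∫⁻ y in E, ∫⁻ z in J, t1 x y z)
      ≤ ENNReal.ofReal (g-f) * (ENNReal.ofReal (2*c₁) * Dint u F J) := by
    have hrhs : ENNReal.ofReal (g-f) * (ENNReal.ofReal (2*c₁) * Dint u F J)
        = ∫⁻ x in F, (ENNReal.ofReal (g-f) * ENNReal.ofReal (2*c₁)) * ∫⁻ z in J, K u x z := by
      rw [Dint, lintegral_const_mul _ (mDinner J), mul_assoc]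
    rw [hrhs]
    apply setLIntegral_mono ((mDinner J).const_mul _)
    intro x hx
    have hxf : x ≤ f := hx.2
    have hgx : (0:ℝ) < g - x := by linarith
    calc ∫⁻ y in E, ∫⁻ z in J, t1 x y z
        = ∫⁻ z in J, ∫⁻ y in E, t1 x y z := by
          apply lintegral_lintegral_swap
          exact (mt1.comp ((measurable_const.prodMk measurable_fst).prodMk
            measurable_snd)).aemeasurable
      _ ≤ ∫⁻ z in J, ENNReal.ofReal (2*(u x - u z)^2/(g-x)^2) * ENNReal.ofReal (e-g) := by
          apply lintegral_mono
          intro z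
          calc ∫⁻ y in E, t1 x y z
              ≤ ∫⁻ _y in E, ENNReal.ofReal (2*(u x - u z)^2/(g-x)^2) := by
                apply setLIntegral_mono measurable_const
                intro y hy
                apply ENNReal.ofReal_le_ofReal
                apply div_le_div_of_nonneg_left (by positivity) (by positivity)
                have : g - x ≤ y - x := by have := hy.1; linarith
                nlinarith
            _ = ENNReal.ofReal (2*(u x - u z)^2/(g-x)^2) * ENNReal.ofReal (e-g) := by
                rw [setLIntegral_const, Real.volume_Ioc]
      _ ≤ ∫⁻ z in J, (ENNReal.ofReal (g-f) * ENNReal.ofReal (2*c₁)) * K u x z := by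
          apply setLIntegral_mono ((mKx x).const_mul _)
          intro z hz
          have hzx : (0:ℝ) < z - x := by have := hz.1; linarith
          have hzg : z - x ≤ g - x := by have := hz.2; linarith
          have hpos2 : (0:ℝ) < (x-z)^2 := by
            rw [show (x-z)^2 = (z-x)^2 by ring]; positivity
          show ENNReal.ofReal (2*(u x - u z)^2/(g-x)^2) * ENNReal.ofReal (e-g)
              ≤ ENNReal.ofReal (g-f) * ENNReal.ofReal (2*c₁) *
                ENNReal.ofReal ((u x - u z)^2/(x-z)^2)
          rw [← ENNReal.ofReal_mul (by positivity), ← ENNReal.ofReal_mul (by positivity),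
            ← ENNReal.ofReal_mul (by positivity)]
          apply ENNReal.ofReal_le_ofReal
          rw [show 2*(u x - u z)^2/(g-x)^2*(e-g) = (2*(u x - u z)^2*(e-g))/(g-x)^2 by ring,
            show (g-f)*(2*c₁)*((u x - u z)^2/(x-z)^2)
              = ((g-f)*(2*c₁)*(u x - u z)^2)/(x-z)^2 by ring,
            div_le_div_iff₀ (by positivity) hpos2]
          have hsq : (z-x)^2 ≤ (g-x)^2 := by nlinarith
          have hmul : (e-g) * (z-x)^2 ≤ (c₁*(g-f)) * (g-x)^2 :=
            mul_le_mul hc₁ hsq (by positivity) (by nlinarith)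
          rw [show (x-z)^2 = (z-x)^2 by ring]
          nlinarith [sq_nonneg (u x - u z), mul_le_mul_of_nonneg_left hmul
            (show (0:ℝ) ≤ 2*(u x - u z)^2 by positivity)]
      _ = (ENNReal.ofReal (g-f) * ENNReal.ofReal (2*c₁)) * ∫⁻ z in J, K u x z :=
          lintegral_const_mul _ (mKx x)
  -- Claim 3
  have mG2 : ∀ y : ℝ, Measurable (fun z => ENNReal.ofReal (2*(u z - u y)^2)) := by
    intro y; exact Measurable.ennreal_ofReal (by fun_prop)
  set G : ℝ → ENNReal := fun y => ∫⁻ z in J, ENNReal.ofReal (2*(u z - u y)^2) with hG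
  have mG : Measurable G := by
    apply Measurable.lintegral_prod_right (f := fun y z => ENNReal.ofReal (2*(u z - u y)^2))
    exact Measurable.ennreal_ofReal (by fun_prop)
  have ht2' : ∀ x y z : ℝ, t2 x y z
      = ENNReal.ofReal (1/(y-x)^2) * ENNReal.ofReal (2*(u z - u y)^2) := by
    intro x y z
    show ENNReal.ofReal (2*(u z - u y)^2/(y-x)^2) = _
    rw [← ENNReal.ofReal_mul (by positivity)]
    congr 1
    ring
  have claim3 : (∫⁻ x in F, ∫⁻ y in E, ∫⁻ z in J, t2 x y z)
      ≤ ENNReal.ofReal (g-f) * (ENNReal.ofReal (2*c₂) * Dint u E J) := by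
    have step2 : (∫⁻ x in F, ∫⁻ y in E, ∫⁻ z in J, t2 x y z)
        = ∫⁻ y in E, (∫⁻ x in F, ENNReal.ofReal (1/(y-x)^2)) * G y := by
      have e1 : (∫⁻ x in F, ∫⁻ y in E, ∫⁻ z in J, t2 x y z)
          = ∫⁻ x in F, ∫⁻ y in E, ENNReal.ofReal (1/(y-x)^2) * G y := by
        apply lintegral_congr; intro x
        apply lintegral_congr; intro y
        simp_rw [ht2']
        exact lintegral_const_mul _ (mG2 y)
      rw [e1, lintegral_lintegral_swap]
      · apply lintegral_congr; intro y
        exact lintegral_mul_const _ (Measurable.ennreal_ofReal (by fun_prop))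
      · apply AEMeasurable.mul ?_ (mG.comp measurable_snd).aemeasurable
        exact (Measurable.ennreal_ofReal (by fun_prop)).aemeasurable
    rw [step2]
    have hrhs : ENNReal.ofReal (g-f) * (ENNReal.ofReal (2*c₂) * Dint u E J)
        = ∫⁻ y in E, (ENNReal.ofReal (g-f) * ENNReal.ofReal (2*c₂)) * ∫⁻ z in J, K u y z := by
      rw [Dint, lintegral_const_mul _ (mDinner J), mul_assoc]
    rw [hrhs]
    apply setLIntegral_mono ((mDinner J).const_mul _)
    intro y hy
    have hgy : g < y := hy.1
    have hfy : f < y := lt_trans hfg hgy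
    have hay : a < y := lt_trans haf hfy
    rw [lint_inv_sq a f y haf hfy]
    calc ENNReal.ofReal (1/(y-f) - 1/(y-a)) * G y
        = ∫⁻ z in J, ENNReal.ofReal (1/(y-f) - 1/(y-a)) * ENNReal.ofReal (2*(u z - u y)^2) :=
          (lintegral_const_mul _ (mG2 y)).symm
      _ ≤ ∫⁻ z in J, (ENNReal.ofReal (g-f) * ENNReal.ofReal (2*c₂)) * K u y z := by
          apply setLIntegral_mono ((mKx y).const_mul _)
          intro z hz
          have hzy : (0:ℝ) < y - z := by have := hz.2; linarith
          have hq : (0:ℝ) ≤ 1/(y-f) - 1/(y-a) := by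
            have h1 : (0:ℝ) < y - f := by linarith
            have h2 : y - f ≤ y - a := by linarith
            have := one_div_le_one_div_of_le h1 h2
            linarith
          show ENNReal.ofReal (1/(y-f) - 1/(y-a)) * ENNReal.ofReal (2*(u z - u y)^2)
              ≤ ENNReal.ofReal (g-f) * ENNReal.ofReal (2*c₂) *
                ENNReal.ofReal ((u y - u z)^2/(y-z)^2)
          rw [← ENNReal.ofReal_mul hq, ← ENNReal.ofReal_mul (by positivity),
            ← ENNReal.ofReal_mul (by positivity)]
          apply ENNReal.ofReal_le_ofReal
          have h := hc₂ z (le_of_lt hz.1) hz.2 y hgy hy.2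
          have hq2 : 1/(y-f) - 1/(y-a) ≤ c₂*(g-f)/(y-z)^2 := by
            rw [le_div_iff₀ (by positivity)]
            linarith [h]
          calc (1/(y-f) - 1/(y-a)) * (2*(u z - u y)^2)
              ≤ (c₂*(g-f)/(y-z)^2) * (2*(u z - u y)^2) :=
                mul_le_mul_of_nonneg_right hq2 (by positivity)
            _ = (g-f)*(2*c₂)*((u y - u z)^2/(y-z)^2) := by
                rw [show (u z - u y)^2 = (u y - u z)^2 by ring]; ring
      _ = (ENNReal.ofReal (g-f) * ENNReal.ofReal (2*c₂)) * ∫⁻ z in J, K u y z :=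
          lintegral_const_mul _ (mKx y)
  -- combine
  have hsplit : (∫⁻ x in F, ∫⁻ y in E, ∫⁻ z in J, (t1 x y z + t2 x y z))
      = (∫⁻ x in F, ∫⁻ y in E, ∫⁻ z in J, t1 x y z)
        + (∫⁻ x in F, ∫⁻ y in E, ∫⁻ z in J, t2 x y z) := by
    rw [← lintegral_add_left mt1xy]
    apply lintegral_congr; intro x
    rw [← lintegral_add_left (mt1y x)]
    apply lintegral_congr; intro y
    rw [← lintegral_add_left (meas_single mt1 x y)]
  have final : ENNReal.ofReal (g-f) * Dint u F E
      ≤ ENNReal.ofReal (g-f) * (ENNReal.ofReal (2*c₁) * Dint u F J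
        + ENNReal.ofReal (2*c₂) * Dint u E J) := by
    calc ENNReal.ofReal (g-f) * Dint u F E
        ≤ ∫⁻ x in F, ∫⁻ y in E, ∫⁻ z in J, (t1 x y z + t2 x y z) := claim1
      _ = _ + _ := hsplit
      _ ≤ ENNReal.ofReal (g-f) * (ENNReal.ofReal (2*c₁) * Dint u F J)
          + ENNReal.ofReal (g-f) * (ENNReal.ofReal (2*c₂) * Dint u E J) :=
          add_le_add claim2 claim3
      _ = _ := (mul_add _ _ _).symm
  exact (ENNReal.mul_le_mul_iff_right ((ENNReal.ofReal_pos.mpr hgf0).ne')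
    ENNReal.ofReal_ne_top).mp final



lemma Dint_split (u : ℝ → ℝ) (hu : Measurable u) (s t : Set ℝ)
    (ht : MeasurableSet t) (hst : Disjoint s t) :
    Dint u (s ∪ t) (s ∪ t)
      = Dint u s s + Dint u s t + Dint u t s + Dint u t t := by
  rw [Dint_union_left u s t (s ∪ t) ht hst,
    Dint_union_right u hu s s t ht hst, Dint_union_right u hu t s t ht hst]
  abel

set_option maxHeartbeats 1000000 in
lemma main_meas (κ : ℝ) (hκ : 1 ≤ κ) (u : ℝ → ℝ) (hu : Measurable u) :
    ∀ ℓ : ℕ, 1 ≤ ℓ → ∀ y : ℕ → ℝ,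
      (∀ k ≤ ℓ, y k < y (k + 1)) →
      (∀ k, 1 ≤ k → k ≤ ℓ →
        (y (k + 1) - y k) / (y k - y (k - 1)) ≤ κ ∧
        (y k - y (k - 1)) / (y (k + 1) - y k) ≤ κ) →
      Dint u (Ioc (y 0) (y (ℓ + 1))) (Ioc (y 0) (y (ℓ + 1)))
        ≤ ENNReal.ofReal (1 + 2 * κ) ^ (ℓ - 1) *
          ∑ k ∈ Finset.Icc 1 ℓ,
            Dint u (Ioc (y (k - 1)) (y (k + 1))) (Ioc (y (k - 1)) (y (k + 1))) := by
  intro ℓ hℓ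
  induction ℓ, hℓ using Nat.le_induction with
  | base =>
    intro y hy hreg
    simp
  | succ ℓ hℓ IH =>
    intro y hy hreg
    -- notation
    set a := y 0 with ha
    set f := y ℓ with hf
    set g := y (ℓ+1) with hg
    set e := y (ℓ+2) with he
    have hmono : ∀ i j : ℕ, i < j → j ≤ ℓ + 2 → y i < y j := by
      intro i j hij hj
      induction j with
      | zero => omega
      | succ n ihn =>
        rcases Nat.lt_succ_iff_lt_or_eq.mp hij with h | h
        · exact lt_trans (ihn h (by omega)) (hy n (by omega))
        · subst h; exact hy i (by omega)
    have haf : a < f := hmono 0 ℓ (by omega) (by omega)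
    have hfg : f < g := hmono ℓ (ℓ+1) (by omega) (by omega)
    have hge : g < e := hmono (ℓ+1) (ℓ+2) (by omega) (by omega)
    have hgf0 : (0:ℝ) < g - f := by linarith
    have hreg' := hreg (ℓ+1) (by omega) (by omega)
    have hc₁ : e - g ≤ κ * (g - f) := by
      have h1 := hreg'.1
      simp only [Nat.add_sub_cancel] at h1
      rw [div_le_iff₀ hgf0] at h1
      linarith
    -- choose c₂
    obtain ⟨c₂, hc₂0, hc₂cond, hc₂pow⟩ :
        ∃ c₂ : ℝ, 0 ≤ c₂ ∧
          (∀ z, f ≤ z → z ≤ g → ∀ w, g < w → w ≤ e →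
            (w - z)^2 * (1/(w-f) - 1/(w-a)) ≤ c₂ * (g - f)) ∧
          (1 + ENNReal.ofReal (2*c₂) ≤ ENNReal.ofReal (1 + 2*κ) ^ ℓ) := by
      have hofR1 : (1:ENNReal) + ENNReal.ofReal (2*κ) = ENNReal.ofReal (1 + 2*κ) := by
        rw [ENNReal.ofReal_add (by norm_num) (by linarith), ENNReal.ofReal_one]
      rcases eq_or_lt_of_le hℓ with h1 | h2
      · -- ℓ = 1
        refine ⟨κ, by linarith, ?_, ?_⟩
        · intro z hz1 hz2 w hw1 hw2
          have hfa : f - a ≤ κ * (g - f) := by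
            have := (hreg 1 le_rfl (by omega)).2
            subst h1
            simp only [Nat.sub_self] at this
            rw [← ha, ← hf, ← hg, div_le_iff₀ (by linarith : (0:ℝ) < g - f)] at this
            linarith
          have hwf : (0:ℝ) < w - f := by linarith
          have hwa : (0:ℝ) < w - a := by linarith
          have hq : 1/(w-f) - 1/(w-a) = (f-a)/((w-f)*(w-a)) := by
            field_simp
            try ring
          rw [hq, mul_div_assoc' , div_le_iff₀ (by positivity)]
          have h1' : (w-z)^2 ≤ (w-f)*(w-a) := by nlinarith
          have := mul_le_mul h1' hfa (by linarith) (by positivity)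
          nlinarith
        · rw [← h1, pow_one, ← hofR1]
      · -- ℓ ≥ 2
        refine ⟨1 + κ, by linarith, ?_, ?_⟩
        · intro z hz1 hz2 w hw1 hw2
          have hwf : (0:ℝ) < w - f := by linarith
          have hwa : (0:ℝ) < w - a := by linarith
          have hq0 : (0:ℝ) ≤ 1/(w-f) - 1/(w-a) := by
            have := one_div_le_one_div_of_le hwf (by linarith : w - f ≤ w - a)
            linarith
          have step1 : (w-z)^2 * (1/(w-f) - 1/(w-a)) ≤ (w-f)^2 * (1/(w-f)) := by
            apply mul_le_mul (by nlinarith) (by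
              have : (0:ℝ) ≤ 1/(w-a) := by positivity
              linarith) hq0 (by positivity)
          have step2 : (w-f)^2 * (1/(w-f)) = w - f := by
            field_simp
            try ring
          have step3 : w - f ≤ (1+κ) * (g - f) := by nlinarith
          linarith [step1, step2.symm ▸ step1]
        · calc (1:ENNReal) + ENNReal.ofReal (2*(1+κ))
              = ENNReal.ofReal (3 + 2*κ) := by
                rw [← ENNReal.ofReal_one, ← ENNReal.ofReal_add (by norm_num) (by linarith)]
                congr 1
                ring
            _ ≤ ENNReal.ofReal ((1+2*κ)^2) := by
                apply ENNReal.ofReal_le_ofReal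
                nlinarith
            _ = ENNReal.ofReal (1+2*κ) ^ 2 := by
                rw [ENNReal.ofReal_pow (by linarith)]
            _ ≤ ENNReal.ofReal (1+2*κ) ^ ℓ := by
                apply pow_le_pow_right₀ _ h2
                rw [show (1:ENNReal) = ENNReal.ofReal 1 by simp]
                exact ENNReal.ofReal_le_ofReal (by linarith)
    -- assembly
    have hag : a ≤ g := le_of_lt (lt_trans haf hfg)
    have d1 : Disjoint (Ioc a g) (Ioc g e) := by
      apply Set.disjoint_left.mpr
      intro x hx1 hx2
      exact absurd hx1.2 (not_le.mpr hx2.1)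
    have d2 : Disjoint (Ioc a f) (Ioc f g) := by
      apply Set.disjoint_left.mpr
      intro x hx1 hx2
      exact absurd hx1.2 (not_le.mpr hx2.1)
    have d3 : Disjoint (Ioc f g) (Ioc g e) := by
      apply Set.disjoint_left.mpr
      intro x hx1 hx2
      exact absurd hx1.2 (not_le.mpr hx2.1)
    have hO : Ioc a e = Ioc a g ∪ Ioc g e := (Ioc_union_Ioc_eq_Ioc hag hge.le).symm
    have hO' : Ioc a g = Ioc a f ∪ Ioc f g := (Ioc_union_Ioc_eq_Ioc haf.le hfg.le).symm
    have hP : Ioc f e = Ioc f g ∪ Ioc g e := (Ioc_union_Ioc_eq_Ioc hfg.le hge.le).symm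
    set AL := Dint u (Ioc a g) (Ioc a g) with hAL
    set SN := Dint u (Ioc f e) (Ioc f e) with hSN
    set DFE := Dint u (Ioc a f) (Ioc g e) with hDFE
    set DFJ := Dint u (Ioc a f) (Ioc f g) with hDFJ
    set DEJ := Dint u (Ioc g e) (Ioc f g) with hDEJ
    set B := Dint u (Ioc g e) (Ioc g e) with hB
    -- decomposition of the full integral
    have decompA : Dint u (Ioc a e) (Ioc a e)
        = AL + (DFE + DFE) + (DEJ + DEJ + B) := by
      rw [hO, Dint_split u hu _ _ measurableSet_Ioc d1]
      have e1 : Dint u (Ioc a g) (Ioc g e) = DFE + Dint u (Ioc f g) (Ioc g e) := by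
        rw [hO']; exact Dint_union_left u _ _ _ measurableSet_Ioc d2
      have e2 : Dint u (Ioc g e) (Ioc a g)
          = Dint u (Ioc g e) (Ioc a f) + DEJ := by
        rw [hO']; exact Dint_union_right u hu _ _ _ measurableSet_Ioc d2
      rw [e1, e2, show Dint u (Ioc g e) (Ioc a f) = DFE from Dint_swap u hu _ _,
        show Dint u (Ioc f g) (Ioc g e) = DEJ from Dint_swap u hu _ _]
      abel
    -- lower bounds
    have hALge : DFJ + DFJ ≤ AL := by
      have : AL = Dint u (Ioc a f) (Ioc a f) + DFJ + Dint u (Ioc f g) (Ioc a f)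
          + Dint u (Ioc f g) (Ioc f g) := by
        rw [hAL, hO']; exact Dint_split u hu _ _ measurableSet_Ioc d2
      rw [this, show Dint u (Ioc f g) (Ioc a f) = DFJ from Dint_swap u hu _ _]
      calc DFJ + DFJ ≤ (Dint u (Ioc a f) (Ioc a f) + DFJ) + DFJ := by
            apply add_le_add_left; exact le_add_self
        _ ≤ _ := le_add_right le_rfl
    have hSNge : DEJ + DEJ + B ≤ SN := by
      have : SN = Dint u (Ioc f g) (Ioc f g) + Dint u (Ioc f g) (Ioc g e)
          + Dint u (Ioc g e) (Ioc f g) + B := by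
        rw [hSN, hP]; exact Dint_split u hu _ _ measurableSet_Ioc d3
      rw [this, show Dint u (Ioc f g) (Ioc g e) = DEJ from Dint_swap u hu _ _]
      apply add_le_add_left
      apply add_le_add_left
      exact le_add_self
    -- cross estimate
    have hcross : DFE ≤ ENNReal.ofReal (2*κ) * DFJ + ENNReal.ofReal (2*c₂) * DEJ :=
      cross_est u hu a f g e κ c₂ haf hfg hge (by linarith) hc₂0 hc₁ hc₂cond
    -- IH
    have hIH : AL ≤ ENNReal.ofReal (1 + 2*κ) ^ (ℓ - 1) *
        ∑ k ∈ Finset.Icc 1 ℓ, Dint u (Ioc (y (k-1)) (y (k+1))) (Ioc (y (k-1)) (y (k+1))) :=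
      IH y (fun k hk => hy k (by omega)) (fun k h1 h2 => hreg k h1 (by omega))
    have hofR1 : (1:ENNReal) + ENNReal.ofReal (2*κ) = ENNReal.ofReal (1 + 2*κ) := by
      rw [ENNReal.ofReal_add (by norm_num) (by linarith), ENNReal.ofReal_one]
    set c : ENNReal := ENNReal.ofReal (1 + 2*κ) with hc
    -- final chain
    have main : Dint u (Ioc a e) (Ioc a e) ≤ c * AL + (c ^ ℓ) * SN := by
      calc Dint u (Ioc a e) (Ioc a e)
          = AL + (DFE + DFE) + (DEJ + DEJ + B) := decompA
        _ ≤ AL + ((ENNReal.ofReal (2*κ) * DFJ + ENNReal.ofReal (2*c₂) * DEJ)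
              + (ENNReal.ofReal (2*κ) * DFJ + ENNReal.ofReal (2*c₂) * DEJ))
              + (DEJ + DEJ + B) := by
            gcongr
        _ = AL + ENNReal.ofReal (2*κ) * (DFJ + DFJ)
              + (ENNReal.ofReal (2*c₂) * (DEJ + DEJ) + (DEJ + DEJ + B)) := by ring
        _ ≤ AL + ENNReal.ofReal (2*κ) * AL
              + (ENNReal.ofReal (2*c₂) * (DEJ + DEJ + B) + (DEJ + DEJ + B)) := by
            exact add_le_add (add_le_add le_rfl (mul_le_mul_right hALge _))
              (add_le_add (mul_le_mul_right (le_add_right le_rfl) _) le_rfl)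
        _ = (1 + ENNReal.ofReal (2*κ)) * AL
              + (1 + ENNReal.ofReal (2*c₂)) * (DEJ + DEJ + B) := by ring
        _ ≤ (1 + ENNReal.ofReal (2*κ)) * AL + (1 + ENNReal.ofReal (2*c₂)) * SN :=
            add_le_add le_rfl (mul_le_mul_right hSNge _)
        _ ≤ c * AL + (c ^ ℓ) * SN :=
            add_le_add (mul_le_mul_left (le_of_eq hofR1) _)
              (mul_le_mul_left hc₂pow _)
    have hpow : c * c ^ (ℓ - 1) = c ^ ℓ := by
      rw [← pow_succ']
      congr 1
      omega
    have hsum : ∑ k ∈ Finset.Icc 1 (ℓ+1),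
          Dint u (Ioc (y (k-1)) (y (k+1))) (Ioc (y (k-1)) (y (k+1)))
        = (∑ k ∈ Finset.Icc 1 ℓ,
            Dint u (Ioc (y (k-1)) (y (k+1))) (Ioc (y (k-1)) (y (k+1)))) + SN := by
      rw [Finset.sum_Icc_succ_top (by omega)]
      congr 1
    simp only [Nat.add_sub_cancel]
    rw [hsum]
    calc Dint u (Ioc a e) (Ioc a e) ≤ c * AL + (c ^ ℓ) * SN := main
      _ ≤ c * (c ^ (ℓ-1) * ∑ k ∈ Finset.Icc 1 ℓ,
            Dint u (Ioc (y (k-1)) (y (k+1))) (Ioc (y (k-1)) (y (k+1)))) + (c ^ ℓ) * SN := by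
          gcongr
      _ = c ^ ℓ * (∑ k ∈ Finset.Icc 1 ℓ,
            Dint u (Ioc (y (k-1)) (y (k+1))) (Ioc (y (k-1)) (y (k+1)))) + (c ^ ℓ) * SN := by
          rw [← mul_assoc, hpow]
      _ = _ := by rw [mul_add]

/-- Local-to-global seminorm estimate over `ℓ+1` consecutive shape-regular
elements (equation (3.10) in the proof of Lemma 3.5). -/
theorem seminorm_local_to_global
    (κ : ℝ) (hκ : 1 ≤ κ) (ℓ : ℕ) (hℓ : 1 ≤ ℓ) (y : ℕ → ℝ)
    (hy : ∀ k ≤ ℓ, y k < y (k + 1))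
    (hreg : ∀ k, 1 ≤ k → k ≤ ℓ →
      (y (k + 1) - y k) / (y k - y (k - 1)) ≤ κ ∧
      (y k - y (k - 1)) / (y (k + 1) - y k) ≤ κ)
    (u : ℝ → ℝ) (hu : MemLp u 2 (volume.restrict (Icc (y 0) (y (ℓ + 1))))) :
    sobSemiSq u (Icc (y 0) (y (ℓ + 1)))
      ≤ ENNReal.ofReal ((1 + 2 * κ) ^ (ℓ - 1)) *
        ∑ k ∈ Finset.Icc 1 ℓ, sobSemiSq u (Icc (y (k - 1)) (y (k + 1))) := by
  obtain ⟨v, hv, huv⟩ : ∃ v : ℝ → ℝ, Measurable v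
      ∧ u =ᵐ[volume.restrict (Icc (y 0) (y (ℓ+1)))] v := by
    have h := hu.aestronglyMeasurable.aemeasurable
    exact ⟨h.mk u, h.measurable_mk, h.ae_eq_mk⟩
  have hmono : ∀ i j : ℕ, i ≤ j → j ≤ ℓ + 1 → y i ≤ y j := by
    intro i j hij hj
    induction j with
    | zero => have : i = 0 := by omega
              subst this; rfl
    | succ n ihn =>
      rcases Nat.le_succ_iff_eq_or_le.mp hij with h | h
      · subst h; rfl
      · exact le_trans (ihn h (by omega)) (hy n (by omega)).le
  have key : ∀ p q : ℝ, Icc p q ⊆ Icc (y 0) (y (ℓ+1)) →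
      sobSemiSq u (Icc p q) = Dint v (Ioc p q) (Ioc p q) := by
    intro p q hsub
    have hae : u =ᵐ[volume.restrict (Icc p q)] v :=
      ae_restrict_of_ae_restrict_of_subset hsub huv
    calc sobSemiSq u (Icc p q) = sobSemiSq v (Icc p q) := by
          unfold sobSemiSq
          apply lintegral_congr_ae
          filter_upwards [hae] with x hx
          apply lintegral_congr_ae
          filter_upwards [hae] with z hz
          rw [hx, hz]
      _ = Dint v (Ioc p q) (Ioc p q) := by
          unfold sobSemiSq Dint K
          rw [setLIntegral_congr (Ioc_ae_eq_Icc (μ := volume) (a := p) (b := q)).symm]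
          exact lintegral_congr fun x =>
            setLIntegral_congr (Ioc_ae_eq_Icc (μ := volume) (a := p) (b := q)).symm
  rw [key (y 0) (y (ℓ+1)) Subset.rfl]
  have hsum : ∀ k ∈ Finset.Icc 1 ℓ, sobSemiSq u (Icc (y (k-1)) (y (k+1)))
      = Dint v (Ioc (y (k-1)) (y (k+1))) (Ioc (y (k-1)) (y (k+1))) := by
    intro k hk
    simp only [Finset.mem_Icc] at hk
    apply key
    exact Icc_subset_Icc (hmono 0 (k-1) (by omega) (by omega))
      (hmono (k+1) (ℓ+1) (by omega) (by omega))
  rw [Finset.sum_congr rfl hsum, ENNReal.ofReal_pow (by linarith)]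
  exact main_meas κ hκ v hv ℓ hℓ y hy hreg
end

section
/- Let L > 0 and κ ≥ 1. There exists a constant C₁ > 0, depending only on L and κ, with the following property: for every partition a = z_0 < z_1 < … < z_n = b of an interval [a,b] of length b − a = L whose element lengths h_j := z_j − z_{j−1} satisfy max(h_{j+1}/h_j, h_j/h_{j+1}) ≤ κ for all 1 ≤ j ≤ n−1, and for every u ∈ L²([a,b]), it holds ‖u‖²_{H^{1/2}([a,b])} ≤ Σ_{j=0}^{n} |u|²_{H^{1/2}(ω_j)} + C₁ Σ_{j=1}^{n} h_j^{−1} ‖u‖²_{L²([z_{j−1}, z_j])}, where ω_0 := [z_0, z_1], ω_j := [z_{j−1}, z_{j+1}] for 1 ≤ j ≤ n−1, and ω_n := [z_{n−1}, z_n]. -/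
open Set MeasureTheory

open Filter


lemma lint_glue (f : ℝ → ENNReal) {p q r : ℝ} (h1 : p ≤ q) (h2 : q ≤ r) :
    (∫⁻ x in Icc p q, f x) + ∫⁻ x in Icc q r, f x = ∫⁻ x in Icc p r, f x := by
  have hu : Icc p q ∪ Icc q r = Icc p r := Icc_union_Icc_eq_Icc h1 h2
  have hi : Icc p q ∩ Icc q r = Icc q q := by
    rw [Icc_inter_Icc, max_eq_right h1, min_eq_left h2]
  have key := Measure.restrict_union_add_inter (μ := (volume : Measure ℝ))
    (Icc p q) (measurableSet_Icc (a := q) (b := r))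
  have key2 := congrArg (fun μ => ∫⁻ x, f x ∂μ) key
  simp only [lintegral_add_measure] at key2
  rw [hu, hi] at key2
  have hz : ∫⁻ x in Icc q q, f x = 0 := by
    rw [Measure.restrict_eq_zero.mpr (by simp)]
    simp
  rw [hz, add_zero] at key2
  exact key2.symm

lemma z_mono (z : ℕ → ℝ) (n : ℕ) (hmono : ∀ i, i < n → z i ≤ z (i + 1)) :
    ∀ i j, i ≤ j → j ≤ n → z i ≤ z j := by
  intro i j hij hjn
  induction j with
  | zero => interval_cases i; rfl
  | succ j ih =>
    rcases Nat.eq_or_lt_of_le hij with h | h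
    · subst h; rfl
    · exact le_trans (ih (by omega) (by omega)) (hmono j (by omega))

lemma lint_tile (f : ℝ → ENNReal) (z : ℕ → ℝ) (s : ℕ) :
    ∀ t, s ≤ t → (∀ i, s ≤ i → i < t → z i ≤ z (i + 1)) →
    ∑ k ∈ Finset.Icc (s + 1) t, ∫⁻ x in Icc (z (k - 1)) (z k), f x
      = ∫⁻ x in Icc (z s) (z t), f x := by
  intro t
  induction t with
  | zero => intro hst _; interval_cases s
            simp [Measure.restrict_eq_zero.mpr (by simp : (volume : Measure ℝ) (Icc (z 0) (z 0)) = 0)]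
  | succ t ih =>
    intro hst hmono
    rcases Nat.eq_or_lt_of_le hst with h | h
    · subst h
      rw [Finset.Icc_eq_empty (by omega)]
      simp [Measure.restrict_eq_zero.mpr (by simp : (volume : Measure ℝ) (Icc (z (t+1)) (z (t+1))) = 0)]
    · have hst' : s ≤ t := by omega
      rw [Finset.sum_Icc_succ_top (by omega), ih hst' (fun i h1 h2 => hmono i h1 (by omega))]
      have hzs : z s ≤ z t := by
        have := z_mono (fun i => z (s + i)) (t - s) (fun i hi => hmono (s + i) (by omega) (by omega)) 0 (t - s) (by omega) le_rfl
        simpa [Nat.add_sub_cancel' hst'] using this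
      have h2 : z t ≤ z (t + 1) := hmono t hst' (by omega)
      rw [show (t + 1 - 1 : ℕ) = t from rfl]
      exact lint_glue f hzs h2


lemma ray_right (c x : ℝ) (h : x < c) :
    ∫⁻ y in Ici c, ENNReal.ofReal (((y - x) ^ 2)⁻¹) ≤ ENNReal.ofReal (c - x)⁻¹ := by
  have hderiv : ∀ y ∈ Ici c, HasDerivAt (fun y : ℝ => -(y - x)⁻¹) (((y - x) ^ 2)⁻¹) y := by
    intro y hy
    have hne : y - x ≠ 0 := by simp only [mem_Ici] at hy; nlinarith
    have h1 : HasDerivAt (fun y : ℝ => y - x) 1 y := (hasDerivAt_id y).sub_const x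
    have h2 : HasDerivAt (fun y : ℝ => -(y - x)⁻¹) (-(-1 / (y - x) ^ 2)) y := (h1.inv hne).neg
    convert h2 using 1
    ring
  have hnn : ∀ y ∈ Ioi c, 0 ≤ ((y - x) ^ 2)⁻¹ := fun y _ => by positivity
  have htend : Tendsto (fun y : ℝ => -(y - x)⁻¹) atTop (nhds 0) := by
    rw [show (0:ℝ) = -0 by ring]
    exact (Filter.Tendsto.comp tendsto_inv_atTop_zero (tendsto_atTop_add_const_right _ (-x) tendsto_id)).neg
  have hint := integrableOn_Ioi_deriv_of_nonneg' hderiv hnn htend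
  have hval := integral_Ioi_of_hasDerivAt_of_nonneg' hderiv hnn htend
  have : ∫⁻ y in Ici c, ENNReal.ofReal (((y - x) ^ 2)⁻¹)
      = ∫⁻ y in Ioi c, ENNReal.ofReal (((y - x) ^ 2)⁻¹) :=
    (setLIntegral_congr Ioi_ae_eq_Ici).symm
  rw [this, ← ofReal_integral_eq_lintegral_ofReal hint
    (Filter.Eventually.of_forall (fun y => by positivity))]
  rw [hval]
  apply ENNReal.ofReal_le_ofReal
  rw [zero_sub, neg_neg]

lemma ray_left (c x : ℝ) (h : c < x) :
    ∫⁻ y in Iic c, ENNReal.ofReal (((y - x) ^ 2)⁻¹) ≤ ENNReal.ofReal (x - c)⁻¹ := by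
  have hmp : MeasurePreserving (fun y : ℝ => -y) volume volume := Measure.measurePreserving_neg _
  have hemb : MeasurableEmbedding (fun y : ℝ => -y) :=
    (Homeomorph.neg ℝ).measurableEmbedding
  have hpre : (fun y : ℝ => -y) ⁻¹' (Iic c) = Ici (-c) := by
    ext y; simp [neg_le]
  have := hmp.setLIntegral_comp_preimage_emb hemb
    (fun y => ENNReal.ofReal (((y - x) ^ 2)⁻¹)) (Iic c)
  rw [hpre] at this
  rw [← this]
  calc ∫⁻ y in Ici (-c), ENNReal.ofReal (((-y - x) ^ 2)⁻¹)
      = ∫⁻ y in Ici (-c), ENNReal.ofReal (((y - (-x)) ^ 2)⁻¹) := by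
        apply lintegral_congr; intro y; congr 2; ring
    _ ≤ ENNReal.ofReal ((-c) - (-x))⁻¹ := ray_right (-c) (-x) (by linarith)
    _ = ENNReal.ofReal (x - c)⁻¹ := by ring_nf

lemma lint_far {c d : ℝ} (hd : 0 < d) (S : Set ℝ) (hS : ∀ y ∈ S, d ≤ |y - c|) :
    ∫⁻ y in S, ENNReal.ofReal (((y - c) ^ 2)⁻¹) ≤ ENNReal.ofReal (2 * d⁻¹) := by
  have hsub : S ⊆ Iic (c - d) ∪ Ici (c + d) := by
    intro y hy
    rcases le_abs.mp (hS y hy) with h | h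
    · right; simp only [mem_Ici]; linarith
    · left; simp only [mem_Iic]; linarith
  calc ∫⁻ y in S, ENNReal.ofReal (((y - c) ^ 2)⁻¹)
      ≤ ∫⁻ y in Iic (c - d) ∪ Ici (c + d), ENNReal.ofReal (((y - c) ^ 2)⁻¹) :=
        lintegral_mono_set hsub
    _ ≤ (∫⁻ y in Iic (c - d), ENNReal.ofReal (((y - c) ^ 2)⁻¹))
        + ∫⁻ y in Ici (c + d), ENNReal.ofReal (((y - c) ^ 2)⁻¹) :=
        lintegral_union_le _ _ _
    _ ≤ ENNReal.ofReal (c - (c - d))⁻¹ + ENNReal.ofReal ((c + d) - c)⁻¹ :=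
        add_le_add (ray_left _ _ (by linarith)) (ray_right _ _ (by linarith))
    _ = ENNReal.ofReal (2 * d⁻¹) := by
        rw [show c - (c - d) = d by ring, show c + d - c = d by ring,
          ← ENNReal.ofReal_add (by positivity) (by positivity)]
        congr 1; ring


noncomputable def fE (u : ℝ → ℝ) (x y : ℝ) : ENNReal :=
  ENNReal.ofReal ((u x - u y) ^ 2 / (x - y) ^ 2)

noncomputable def gkf (x y : ℝ) : ENNReal := ENNReal.ofReal (((x - y) ^ 2)⁻¹)

noncomputable def w2f (u : ℝ → ℝ) (x : ℝ) : ENNReal := ENNReal.ofReal (2 * u x ^ 2)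

lemma fE_le (u : ℝ → ℝ) (x y : ℝ) : fE u x y ≤ (w2f u x + w2f u y) * gkf x y := by
  have h1 : (u x - u y) ^ 2 / (x - y) ^ 2 = (u x - u y) ^ 2 * ((x - y) ^ 2)⁻¹ :=
    div_eq_mul_inv _ _
  have h2 : (u x - u y) ^ 2 * ((x - y) ^ 2)⁻¹
      ≤ (2 * u x ^ 2 + 2 * u y ^ 2) * ((x - y) ^ 2)⁻¹ := by
    apply mul_le_mul_of_nonneg_right (by nlinarith [sq_nonneg (u x + u y)]) (by positivity)
  calc fE u x y ≤ ENNReal.ofReal ((2 * u x ^ 2 + 2 * u y ^ 2) * ((x - y) ^ 2)⁻¹) := by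
        rw [fE, h1]; exact ENNReal.ofReal_le_ofReal h2
    _ = (w2f u x + w2f u y) * gkf x y := by
        rw [ENNReal.ofReal_mul (by positivity), ENNReal.ofReal_add (by positivity) (by positivity)]
        rfl

lemma fE_meas {u : ℝ → ℝ} (hu : Measurable u) : Measurable (Function.uncurry (fE u)) := by
  apply Measurable.ennreal_ofReal
  exact (((hu.comp measurable_fst).sub (hu.comp measurable_snd)).pow_const 2).div
    ((measurable_fst.sub measurable_snd).pow_const 2)

lemma gkf_meas : Measurable (Function.uncurry gkf) := by
  apply Measurable.ennreal_ofReal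
  exact ((measurable_fst.sub measurable_snd).pow_const 2).inv

lemma gkf_meas' : Measurable (Function.uncurry (fun y x => gkf x y)) := by
  apply Measurable.ennreal_ofReal
  exact ((measurable_snd.sub measurable_fst).pow_const 2).inv

lemma w2f_meas {u : ℝ → ℝ} (hu : Measurable u) : Measurable (w2f u) := by
  apply Measurable.ennreal_ofReal
  exact (hu.pow_const 2).const_mul 2

lemma w2_const_int (u : ℝ → ℝ) (s : Set ℝ) (r : ℝ) :
    ∫⁻ x in s, w2f u x * ENNReal.ofReal r
      = ENNReal.ofReal (2 * r) * l2Sq u s := by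
  have hpt : ∀ x, w2f u x * ENNReal.ofReal r
      = ENNReal.ofReal (2 * r) * ENNReal.ofReal (u x ^ 2) := by
    intro x
    rw [w2f, ENNReal.ofReal_mul (by norm_num : (0:ℝ) ≤ 2),
      ENNReal.ofReal_mul (by norm_num : (0:ℝ) ≤ 2)]
    ring
  simp only [hpt]
  rw [lintegral_const_mul' _ _ ENNReal.ofReal_ne_top]
  rfl

lemma sum_swap_lower {M : Type*} [AddCommMonoid M] (n : ℕ) (T : ℕ → ℕ → M) :
    ∑ k ∈ Finset.Icc 1 n, ∑ m ∈ Finset.Icc 1 (k - 2), T k m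
      = ∑ m ∈ Finset.Icc 1 n, ∑ k ∈ Finset.Icc (m + 2) n, T k m := by
  have step1 : ∀ k ∈ Finset.Icc 1 n, ∑ m ∈ Finset.Icc 1 (k - 2), T k m
      = ∑ m ∈ Finset.Icc 1 n, if m + 2 ≤ k then T k m else 0 := by
    intro k hk
    simp only [Finset.mem_Icc] at hk
    rw [← Finset.sum_filter]
    congr 1
    ext m
    simp only [Finset.mem_filter, Finset.mem_Icc]
    omega
  rw [Finset.sum_congr rfl step1, Finset.sum_comm]
  apply Finset.sum_congr rfl
  intro m _
  rw [← Finset.sum_filter]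
  congr 1
  ext k
  simp only [Finset.mem_filter, Finset.mem_Icc]
  omega

lemma sum_swap_upper {M : Type*} [AddCommMonoid M] (n : ℕ) (T : ℕ → ℕ → M) :
    ∑ k ∈ Finset.Icc 1 n, ∑ m ∈ Finset.Icc (k + 2) n, T k m
      = ∑ m ∈ Finset.Icc 1 n, ∑ k ∈ Finset.Icc 1 (m - 2), T k m :=
  (sum_swap_lower n (fun k m => T m k)).symm

lemma w2f_ne_top (u : ℝ → ℝ) (x : ℝ) : w2f u x ≠ ⊤ := ENNReal.ofReal_ne_top

lemma hGk_meas (S : Set ℝ) : Measurable (fun y => ∫⁻ x in S, gkf x y) :=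
  Measurable.lintegral_prod_right (f := fun y x => gkf x y) gkf_meas'

lemma gkf_symm (x y : ℝ) : gkf x y = ENNReal.ofReal (((y - x) ^ 2)⁻¹) := by
  rw [gkf]; congr 2; ring

lemma ofReal_far_eq (κ h : ℝ) : ENNReal.ofReal (2 * (h / κ)⁻¹) = ENNReal.ofReal (2 * (κ * h⁻¹)) := by
  congr 1
  rw [inv_div, div_eq_mul_inv]

lemma far_sum_L (κ : ℝ) (hκ0 : 0 < κ) (n : ℕ) (z : ℕ → ℝ)
    (hmono : ∀ i j, i ≤ j → j ≤ n → z i ≤ z j)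
    (hpos : ∀ k, 1 ≤ k → k ≤ n → 0 < z k - z (k - 1))
    (hmesh1 : ∀ k, 2 ≤ k → k ≤ n → (z k - z (k - 1)) / κ ≤ z (k - 1) - z (k - 2))
    (hmesh2 : ∀ k, 1 ≤ k → k < n → (z k - z (k - 1)) / κ ≤ z (k + 1) - z k)
    (u : ℝ → ℝ) (hu : Measurable u) :
    ∑ k ∈ Finset.Icc 1 n, ∫⁻ x in Icc (z (k - 1)) (z k), ∫⁻ y in Icc (z 0) (z (k - 2)), fE u x y
      ≤ ENNReal.ofReal (8 * κ) * ∑ m ∈ Finset.Icc 1 n,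
          ENNReal.ofReal ((z m - z (m - 1))⁻¹) * l2Sq u (Icc (z (m - 1)) (z m)) := by
  set W := ∑ m ∈ Finset.Icc 1 n,
      ENNReal.ofReal ((z m - z (m - 1))⁻¹) * l2Sq u (Icc (z (m - 1)) (z m)) with hW
  -- step 1 : elementwise split into x-part and y-part
  have step1 : ∀ k ∈ Finset.Icc 1 n,
      (∫⁻ x in Icc (z (k - 1)) (z k), ∫⁻ y in Icc (z 0) (z (k - 2)), fE u x y)
        ≤ ENNReal.ofReal (4 * κ) *
            (ENNReal.ofReal ((z k - z (k - 1))⁻¹) * l2Sq u (Icc (z (k - 1)) (z k)))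
          + ∫⁻ y in Icc (z 0) (z (k - 2)), w2f u y * ∫⁻ x in Icc (z (k - 1)) (z k), gkf x y := by
    intro k hk
    simp only [Finset.mem_Icc] at hk
    obtain ⟨hk1, hkn⟩ := hk
    have hpk := hpos k hk1 hkn
    have claimGL : ∀ x ∈ Icc (z (k - 1)) (z k),
        (∫⁻ y in Icc (z 0) (z (k - 2)), gkf x y)
          ≤ ENNReal.ofReal (2 * (κ * (z k - z (k - 1))⁻¹)) := by
      intro x hx
      by_cases hk2 : 2 ≤ k
      · have hd : 0 < (z k - z (k - 1)) / κ := div_pos hpk hκ0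
        have hdist : ∀ y ∈ Icc (z 0) (z (k - 2)), (z k - z (k - 1)) / κ ≤ |y - x| := by
          intro y hy
          have h1 : y ≤ z (k - 2) := hy.2
          have h2 : z (k - 1) ≤ x := hx.1
          have h3 := hmesh1 k hk2 hkn
          have h4 : (z k - z (k - 1)) / κ ≤ x - y := by linarith
          calc (z k - z (k - 1)) / κ ≤ x - y := h4
            _ ≤ |x - y| := le_abs_self _
            _ = |y - x| := abs_sub_comm _ _
        have hfar := lint_far hd (Icc (z 0) (z (k - 2))) hdist
        calc ∫⁻ y in Icc (z 0) (z (k - 2)), gkf x y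
            = ∫⁻ y in Icc (z 0) (z (k - 2)), ENNReal.ofReal (((y - x) ^ 2)⁻¹) :=
              lintegral_congr fun y => gkf_symm x y
          _ ≤ ENNReal.ofReal (2 * ((z k - z (k - 1)) / κ)⁻¹) := hfar
          _ = ENNReal.ofReal (2 * (κ * (z k - z (k - 1))⁻¹)) := ofReal_far_eq κ _
      · have hk1' : k = 1 := by omega
        subst hk1'
        rw [show (1 - 2 : ℕ) = 0 from rfl]
        rw [Measure.restrict_eq_zero.mpr (by simp)]
        simp
    have hswap : (∫⁻ x in Icc (z (k - 1)) (z k), ∫⁻ y in Icc (z 0) (z (k - 2)), w2f u y * gkf x y)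
        = ∫⁻ y in Icc (z 0) (z (k - 2)), w2f u y * ∫⁻ x in Icc (z (k - 1)) (z k), gkf x y := by
      rw [lintegral_lintegral_swap]
      · exact lintegral_congr fun y => lintegral_const_mul' _ _ (w2f_ne_top u y)
      · exact (((w2f_meas hu).comp measurable_snd).mul gkf_meas).aemeasurable
    calc (∫⁻ x in Icc (z (k - 1)) (z k), ∫⁻ y in Icc (z 0) (z (k - 2)), fE u x y)
        ≤ ∫⁻ x in Icc (z (k - 1)) (z k), ∫⁻ y in Icc (z 0) (z (k - 2)),
            (w2f u x * gkf x y + w2f u y * gkf x y) := by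
          refine lintegral_mono fun x => lintegral_mono fun y => ?_
          calc fE u x y ≤ (w2f u x + w2f u y) * gkf x y := fE_le u x y
            _ = w2f u x * gkf x y + w2f u y * gkf x y := add_mul _ _ _
      _ = ∫⁻ x in Icc (z (k - 1)) (z k),
            (w2f u x * (∫⁻ y in Icc (z 0) (z (k - 2)), gkf x y)
              + ∫⁻ y in Icc (z 0) (z (k - 2)), w2f u y * gkf x y) := by
          refine lintegral_congr fun x => ?_
          have hgkx : Measurable fun y => gkf x y := by
            apply Measurable.ennreal_ofReal
            exact ((measurable_const.sub measurable_id).pow_const 2).inv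
          rw [lintegral_add_left (f := fun y => w2f u x * gkf x y) (measurable_const.mul hgkx)]
          rw [lintegral_const_mul' _ _ (w2f_ne_top u x)]
      _ = (∫⁻ x in Icc (z (k - 1)) (z k), w2f u x * (∫⁻ y in Icc (z 0) (z (k - 2)), gkf x y))
            + ∫⁻ x in Icc (z (k - 1)) (z k), ∫⁻ y in Icc (z 0) (z (k - 2)), w2f u y * gkf x y := by
          apply lintegral_add_left
          exact (w2f_meas hu).mul (Measurable.lintegral_prod_right gkf_meas)
      _ ≤ ENNReal.ofReal (4 * κ) *
            (ENNReal.ofReal ((z k - z (k - 1))⁻¹) * l2Sq u (Icc (z (k - 1)) (z k)))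
          + ∫⁻ y in Icc (z 0) (z (k - 2)), w2f u y * ∫⁻ x in Icc (z (k - 1)) (z k), gkf x y := by
          rw [hswap]
          apply add_le_add_left
          calc (∫⁻ x in Icc (z (k - 1)) (z k), w2f u x * (∫⁻ y in Icc (z 0) (z (k - 2)), gkf x y))
              ≤ ∫⁻ x in Icc (z (k - 1)) (z k),
                  w2f u x * ENNReal.ofReal (2 * (κ * (z k - z (k - 1))⁻¹)) := by
                refine setLIntegral_mono ((w2f_meas hu).mul measurable_const) fun x hx => ?_
                exact mul_le_mul_right (claimGL x hx) _
            _ = ENNReal.ofReal (2 * (2 * (κ * (z k - z (k - 1))⁻¹))) *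
                  l2Sq u (Icc (z (k - 1)) (z k)) := w2_const_int u _ _
            _ = ENNReal.ofReal (4 * κ) *
                  (ENNReal.ofReal ((z k - z (k - 1))⁻¹) * l2Sq u (Icc (z (k - 1)) (z k))) := by
                have he : ENNReal.ofReal (2 * (2 * (κ * (z k - z (k - 1))⁻¹)))
                    = ENNReal.ofReal (4 * κ) * ENNReal.ofReal ((z k - z (k - 1))⁻¹) := by
                  rw [← ENNReal.ofReal_mul (by positivity : (0:ℝ) ≤ 4 * κ)]
                  congr 1; ring
                rw [he, mul_assoc]
  -- step 2 : the y-part sums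
  have step2 : ∑ k ∈ Finset.Icc 1 n,
      (∫⁻ y in Icc (z 0) (z (k - 2)), w2f u y * ∫⁻ x in Icc (z (k - 1)) (z k), gkf x y)
        ≤ ENNReal.ofReal (4 * κ) * W := by
    have htile : ∀ k ∈ Finset.Icc 1 n,
        (∫⁻ y in Icc (z 0) (z (k - 2)), w2f u y * ∫⁻ x in Icc (z (k - 1)) (z k), gkf x y)
          = ∑ m ∈ Finset.Icc 1 (k - 2), ∫⁻ y in Icc (z (m - 1)) (z m),
              w2f u y * ∫⁻ x in Icc (z (k - 1)) (z k), gkf x y := by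
      intro k hk
      simp only [Finset.mem_Icc] at hk
      exact (lint_tile _ z 0 (k - 2) (by omega)
        (fun i h1 h2 => hmono i (i + 1) (by omega) (by omega))).symm
    rw [Finset.sum_congr rfl htile, sum_swap_lower, hW, Finset.mul_sum]
    apply Finset.sum_le_sum
    intro m hm
    simp only [Finset.mem_Icc] at hm
    have claimSum : ∀ y ∈ Icc (z (m - 1)) (z m),
        (∑ k ∈ Finset.Icc (m + 2) n, ∫⁻ x in Icc (z (k - 1)) (z k), gkf x y)
          ≤ ENNReal.ofReal (2 * (κ * (z m - z (m - 1))⁻¹)) := by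
      intro y hy
      by_cases hmn : m < n
      · have htile2 := lint_tile (fun x => gkf x y) z (m + 1) n (by omega)
          (fun i h1 h2 => hmono i (i + 1) (by omega) (by omega))
        rw [show m + 1 + 1 = m + 2 from rfl] at htile2
        rw [htile2]
        have hd : 0 < (z m - z (m - 1)) / κ := div_pos (hpos m hm.1 hm.2) hκ0
        have hdist : ∀ x ∈ Icc (z (m + 1)) (z n), (z m - z (m - 1)) / κ ≤ |x - y| := by
          intro x hx
          have h1 : z (m + 1) ≤ x := hx.1
          have h2 : y ≤ z m := hy.2
          have h3 := hmesh2 m hm.1 hmn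
          have h4 : (z m - z (m - 1)) / κ ≤ x - y := by linarith
          exact le_trans h4 (le_abs_self _)
        calc (∫⁻ x in Icc (z (m + 1)) (z n), gkf x y)
            ≤ ENNReal.ofReal (2 * ((z m - z (m - 1)) / κ)⁻¹) :=
              lint_far hd (Icc (z (m + 1)) (z n)) hdist
          _ = ENNReal.ofReal (2 * (κ * (z m - z (m - 1))⁻¹)) := ofReal_far_eq κ _
      · rw [Finset.Icc_eq_empty (by omega), Finset.sum_empty]
        exact zero_le
    calc ∑ k ∈ Finset.Icc (m + 2) n, ∫⁻ y in Icc (z (m - 1)) (z m),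
            w2f u y * ∫⁻ x in Icc (z (k - 1)) (z k), gkf x y
        = ∫⁻ y in Icc (z (m - 1)) (z m), ∑ k ∈ Finset.Icc (m + 2) n,
            w2f u y * ∫⁻ x in Icc (z (k - 1)) (z k), gkf x y := by
          rw [lintegral_finset_sum _ (f := fun k y => w2f u y * ∫⁻ x in Icc (z (k - 1)) (z k), gkf x y) (fun k _ => (w2f_meas hu).mul (hGk_meas _))]
      _ = ∫⁻ y in Icc (z (m - 1)) (z m),
            w2f u y * ∑ k ∈ Finset.Icc (m + 2) n, ∫⁻ x in Icc (z (k - 1)) (z k), gkf x y := by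
          exact lintegral_congr fun y => (Finset.mul_sum _ _ _).symm
      _ ≤ ∫⁻ y in Icc (z (m - 1)) (z m),
            w2f u y * ENNReal.ofReal (2 * (κ * (z m - z (m - 1))⁻¹)) := by
          refine setLIntegral_mono ((w2f_meas hu).mul measurable_const) fun y hy => ?_
          exact mul_le_mul_right (claimSum y hy) _
      _ = ENNReal.ofReal (2 * (2 * (κ * (z m - z (m - 1))⁻¹))) *
            l2Sq u (Icc (z (m - 1)) (z m)) := w2_const_int u _ _
      _ ≤ ENNReal.ofReal (4 * κ) *
            (ENNReal.ofReal ((z m - z (m - 1))⁻¹) * l2Sq u (Icc (z (m - 1)) (z m))) := by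
          have he : ENNReal.ofReal (2 * (2 * (κ * (z m - z (m - 1))⁻¹)))
              = ENNReal.ofReal (4 * κ) * ENNReal.ofReal ((z m - z (m - 1))⁻¹) := by
            rw [← ENNReal.ofReal_mul (by positivity : (0:ℝ) ≤ 4 * κ)]
            congr 1; ring
          rw [he, mul_assoc]
  calc ∑ k ∈ Finset.Icc 1 n, ∫⁻ x in Icc (z (k - 1)) (z k), ∫⁻ y in Icc (z 0) (z (k - 2)), fE u x y
      ≤ ∑ k ∈ Finset.Icc 1 n,
          (ENNReal.ofReal (4 * κ) *
              (ENNReal.ofReal ((z k - z (k - 1))⁻¹) * l2Sq u (Icc (z (k - 1)) (z k)))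
            + ∫⁻ y in Icc (z 0) (z (k - 2)), w2f u y * ∫⁻ x in Icc (z (k - 1)) (z k), gkf x y) :=
        Finset.sum_le_sum step1
    _ = ENNReal.ofReal (4 * κ) * W
        + ∑ k ∈ Finset.Icc 1 n,
            (∫⁻ y in Icc (z 0) (z (k - 2)), w2f u y * ∫⁻ x in Icc (z (k - 1)) (z k), gkf x y) := by
        rw [Finset.sum_add_distrib, ← Finset.mul_sum, hW]
    _ ≤ ENNReal.ofReal (4 * κ) * W + ENNReal.ofReal (4 * κ) * W :=
        add_le_add_right step2 _
    _ = ENNReal.ofReal (8 * κ) * W := by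
        rw [← add_mul, ← ENNReal.ofReal_add (by positivity) (by positivity)]
        congr 2
        ring

lemma far_sum_R (κ : ℝ) (hκ0 : 0 < κ) (n : ℕ) (z : ℕ → ℝ)
    (hmono : ∀ i j, i ≤ j → j ≤ n → z i ≤ z j)
    (hpos : ∀ k, 1 ≤ k → k ≤ n → 0 < z k - z (k - 1))
    (hmesh1 : ∀ k, 2 ≤ k → k ≤ n → (z k - z (k - 1)) / κ ≤ z (k - 1) - z (k - 2))
    (hmesh2 : ∀ k, 1 ≤ k → k < n → (z k - z (k - 1)) / κ ≤ z (k + 1) - z k)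
    (u : ℝ → ℝ) (hu : Measurable u) :
    ∑ k ∈ Finset.Icc 1 n, ∫⁻ x in Icc (z (k - 1)) (z k),
        ∫⁻ y in Icc (z (min (k + 1) n)) (z n), fE u x y
      ≤ ENNReal.ofReal (8 * κ) * ∑ m ∈ Finset.Icc 1 n,
          ENNReal.ofReal ((z m - z (m - 1))⁻¹) * l2Sq u (Icc (z (m - 1)) (z m)) := by
  set W := ∑ m ∈ Finset.Icc 1 n,
      ENNReal.ofReal ((z m - z (m - 1))⁻¹) * l2Sq u (Icc (z (m - 1)) (z m)) with hW
  have step1 : ∀ k ∈ Finset.Icc 1 n,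
      (∫⁻ x in Icc (z (k - 1)) (z k), ∫⁻ y in Icc (z (min (k + 1) n)) (z n), fE u x y)
        ≤ ENNReal.ofReal (4 * κ) *
            (ENNReal.ofReal ((z k - z (k - 1))⁻¹) * l2Sq u (Icc (z (k - 1)) (z k)))
          + ∫⁻ y in Icc (z (min (k + 1) n)) (z n), w2f u y * ∫⁻ x in Icc (z (k - 1)) (z k), gkf x y := by
    intro k hk
    simp only [Finset.mem_Icc] at hk
    obtain ⟨hk1, hkn⟩ := hk
    have hpk := hpos k hk1 hkn
    have claimGR : ∀ x ∈ Icc (z (k - 1)) (z k),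
        (∫⁻ y in Icc (z (min (k + 1) n)) (z n), gkf x y)
          ≤ ENNReal.ofReal (2 * (κ * (z k - z (k - 1))⁻¹)) := by
      intro x hx
      by_cases hklt : k < n
      · rw [min_eq_left (by omega : k + 1 ≤ n)]
        have hd : 0 < (z k - z (k - 1)) / κ := div_pos hpk hκ0
        have hdist : ∀ y ∈ Icc (z (k + 1)) (z n), (z k - z (k - 1)) / κ ≤ |y - x| := by
          intro y hy
          have h1 : z (k + 1) ≤ y := hy.1
          have h2 : x ≤ z k := hx.2
          have h3 := hmesh2 k hk1 hklt
          have h4 : (z k - z (k - 1)) / κ ≤ y - x := by linarith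
          exact le_trans h4 (le_abs_self _)
        have hfar := lint_far hd (Icc (z (k + 1)) (z n)) hdist
        calc ∫⁻ y in Icc (z (k + 1)) (z n), gkf x y
            = ∫⁻ y in Icc (z (k + 1)) (z n), ENNReal.ofReal (((y - x) ^ 2)⁻¹) :=
              lintegral_congr fun y => gkf_symm x y
          _ ≤ ENNReal.ofReal (2 * ((z k - z (k - 1)) / κ)⁻¹) := hfar
          _ = ENNReal.ofReal (2 * (κ * (z k - z (k - 1))⁻¹)) := ofReal_far_eq κ _
      · rw [min_eq_right (by omega : n ≤ k + 1), show k = n by omega]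
        rw [Measure.restrict_eq_zero.mpr (by simp)]
        simp
    have hswap : (∫⁻ x in Icc (z (k - 1)) (z k),
          ∫⁻ y in Icc (z (min (k + 1) n)) (z n), w2f u y * gkf x y)
        = ∫⁻ y in Icc (z (min (k + 1) n)) (z n),
            w2f u y * ∫⁻ x in Icc (z (k - 1)) (z k), gkf x y := by
      rw [lintegral_lintegral_swap]
      · exact lintegral_congr fun y => lintegral_const_mul' _ _ (w2f_ne_top u y)
      · exact (((w2f_meas hu).comp measurable_snd).mul gkf_meas).aemeasurable
    calc (∫⁻ x in Icc (z (k - 1)) (z k), ∫⁻ y in Icc (z (min (k + 1) n)) (z n), fE u x y)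
        ≤ ∫⁻ x in Icc (z (k - 1)) (z k), ∫⁻ y in Icc (z (min (k + 1) n)) (z n),
            (w2f u x * gkf x y + w2f u y * gkf x y) := by
          refine lintegral_mono fun x => lintegral_mono fun y => ?_
          calc fE u x y ≤ (w2f u x + w2f u y) * gkf x y := fE_le u x y
            _ = w2f u x * gkf x y + w2f u y * gkf x y := add_mul _ _ _
      _ = ∫⁻ x in Icc (z (k - 1)) (z k),
            (w2f u x * (∫⁻ y in Icc (z (min (k + 1) n)) (z n), gkf x y)
              + ∫⁻ y in Icc (z (min (k + 1) n)) (z n), w2f u y * gkf x y) := by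
          refine lintegral_congr fun x => ?_
          have hgkx : Measurable fun y => gkf x y := by
            apply Measurable.ennreal_ofReal
            exact ((measurable_const.sub measurable_id).pow_const 2).inv
          rw [lintegral_add_left (f := fun y => w2f u x * gkf x y) (measurable_const.mul hgkx)]
          rw [lintegral_const_mul' _ _ (w2f_ne_top u x)]
      _ = (∫⁻ x in Icc (z (k - 1)) (z k),
              w2f u x * (∫⁻ y in Icc (z (min (k + 1) n)) (z n), gkf x y))
            + ∫⁻ x in Icc (z (k - 1)) (z k),
                ∫⁻ y in Icc (z (min (k + 1) n)) (z n), w2f u y * gkf x y := by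
          apply lintegral_add_left
          exact (w2f_meas hu).mul (Measurable.lintegral_prod_right gkf_meas)
      _ ≤ ENNReal.ofReal (4 * κ) *
            (ENNReal.ofReal ((z k - z (k - 1))⁻¹) * l2Sq u (Icc (z (k - 1)) (z k)))
          + ∫⁻ y in Icc (z (min (k + 1) n)) (z n),
              w2f u y * ∫⁻ x in Icc (z (k - 1)) (z k), gkf x y := by
          rw [hswap]
          apply add_le_add_left
          calc (∫⁻ x in Icc (z (k - 1)) (z k),
                  w2f u x * (∫⁻ y in Icc (z (min (k + 1) n)) (z n), gkf x y))
              ≤ ∫⁻ x in Icc (z (k - 1)) (z k),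
                  w2f u x * ENNReal.ofReal (2 * (κ * (z k - z (k - 1))⁻¹)) := by
                refine setLIntegral_mono ((w2f_meas hu).mul measurable_const) fun x hx => ?_
                exact mul_le_mul_right (claimGR x hx) _
            _ = ENNReal.ofReal (2 * (2 * (κ * (z k - z (k - 1))⁻¹))) *
                  l2Sq u (Icc (z (k - 1)) (z k)) := w2_const_int u _ _
            _ = ENNReal.ofReal (4 * κ) *
                  (ENNReal.ofReal ((z k - z (k - 1))⁻¹) * l2Sq u (Icc (z (k - 1)) (z k))) := by
                have he : ENNReal.ofReal (2 * (2 * (κ * (z k - z (k - 1))⁻¹)))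
                    = ENNReal.ofReal (4 * κ) * ENNReal.ofReal ((z k - z (k - 1))⁻¹) := by
                  rw [← ENNReal.ofReal_mul (by positivity : (0:ℝ) ≤ 4 * κ)]
                  congr 1; ring
                rw [he, mul_assoc]
  have step2 : ∑ k ∈ Finset.Icc 1 n,
      (∫⁻ y in Icc (z (min (k + 1) n)) (z n), w2f u y * ∫⁻ x in Icc (z (k - 1)) (z k), gkf x y)
        ≤ ENNReal.ofReal (4 * κ) * W := by
    have htile : ∀ k ∈ Finset.Icc 1 n,
        (∫⁻ y in Icc (z (min (k + 1) n)) (z n), w2f u y * ∫⁻ x in Icc (z (k - 1)) (z k), gkf x y)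
          = ∑ m ∈ Finset.Icc (k + 2) n, ∫⁻ y in Icc (z (m - 1)) (z m),
              w2f u y * ∫⁻ x in Icc (z (k - 1)) (z k), gkf x y := by
      intro k hk
      simp only [Finset.mem_Icc] at hk
      have ht := (lint_tile (fun y => w2f u y * ∫⁻ x in Icc (z (k - 1)) (z k), gkf x y)
        z (min (k + 1) n) n (min_le_right _ _)
        (fun i h1 h2 => hmono i (i + 1) (by omega) (by omega))).symm
      rw [ht]
      apply Finset.sum_congr _ (fun _ _ => rfl)
      ext x
      simp only [Finset.mem_Icc]
      omega
    rw [Finset.sum_congr rfl htile, sum_swap_upper, hW, Finset.mul_sum]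
    apply Finset.sum_le_sum
    intro m hm
    simp only [Finset.mem_Icc] at hm
    have claimSum : ∀ y ∈ Icc (z (m - 1)) (z m),
        (∑ k ∈ Finset.Icc 1 (m - 2), ∫⁻ x in Icc (z (k - 1)) (z k), gkf x y)
          ≤ ENNReal.ofReal (2 * (κ * (z m - z (m - 1))⁻¹)) := by
      intro y hy
      by_cases hm2 : 2 ≤ m
      · have htile2 := lint_tile (fun x => gkf x y) z 0 (m - 2) (by omega)
          (fun i h1 h2 => hmono i (i + 1) (by omega) (by omega))
        rw [show (0 + 1 : ℕ) = 1 from rfl] at htile2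
        rw [htile2]
        have hd : 0 < (z m - z (m - 1)) / κ := div_pos (hpos m hm.1 hm.2) hκ0
        have hdist : ∀ x ∈ Icc (z 0) (z (m - 2)), (z m - z (m - 1)) / κ ≤ |x - y| := by
          intro x hx
          have h1 : x ≤ z (m - 2) := hx.2
          have h2 : z (m - 1) ≤ y := hy.1
          have h3 := hmesh1 m hm2 hm.2
          have h4 : (z m - z (m - 1)) / κ ≤ y - x := by linarith
          calc (z m - z (m - 1)) / κ ≤ y - x := h4
            _ ≤ |y - x| := le_abs_self _
            _ = |x - y| := abs_sub_comm _ _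
        calc (∫⁻ x in Icc (z 0) (z (m - 2)), gkf x y)
            ≤ ENNReal.ofReal (2 * ((z m - z (m - 1)) / κ)⁻¹) :=
              lint_far hd (Icc (z 0) (z (m - 2))) hdist
          _ = ENNReal.ofReal (2 * (κ * (z m - z (m - 1))⁻¹)) := ofReal_far_eq κ _
      · rw [Finset.Icc_eq_empty (by omega), Finset.sum_empty]
        exact zero_le
    calc ∑ k ∈ Finset.Icc 1 (m - 2), ∫⁻ y in Icc (z (m - 1)) (z m),
            w2f u y * ∫⁻ x in Icc (z (k - 1)) (z k), gkf x y
        = ∫⁻ y in Icc (z (m - 1)) (z m), ∑ k ∈ Finset.Icc 1 (m - 2),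
            w2f u y * ∫⁻ x in Icc (z (k - 1)) (z k), gkf x y := by
          rw [lintegral_finset_sum _ (f := fun k y => w2f u y * ∫⁻ x in Icc (z (k - 1)) (z k), gkf x y) (fun k _ => (w2f_meas hu).mul (hGk_meas _))]
      _ = ∫⁻ y in Icc (z (m - 1)) (z m),
            w2f u y * ∑ k ∈ Finset.Icc 1 (m - 2), ∫⁻ x in Icc (z (k - 1)) (z k), gkf x y := by
          exact lintegral_congr fun y => (Finset.mul_sum _ _ _).symm
      _ ≤ ∫⁻ y in Icc (z (m - 1)) (z m),
            w2f u y * ENNReal.ofReal (2 * (κ * (z m - z (m - 1))⁻¹)) := by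
          refine setLIntegral_mono ((w2f_meas hu).mul measurable_const) fun y hy => ?_
          exact mul_le_mul_right (claimSum y hy) _
      _ = ENNReal.ofReal (2 * (2 * (κ * (z m - z (m - 1))⁻¹))) *
            l2Sq u (Icc (z (m - 1)) (z m)) := w2_const_int u _ _
      _ ≤ ENNReal.ofReal (4 * κ) *
            (ENNReal.ofReal ((z m - z (m - 1))⁻¹) * l2Sq u (Icc (z (m - 1)) (z m))) := by
          have he : ENNReal.ofReal (2 * (2 * (κ * (z m - z (m - 1))⁻¹)))
              = ENNReal.ofReal (4 * κ) * ENNReal.ofReal ((z m - z (m - 1))⁻¹) := by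
            rw [← ENNReal.ofReal_mul (by positivity : (0:ℝ) ≤ 4 * κ)]
            congr 1; ring
          rw [he, mul_assoc]
  calc ∑ k ∈ Finset.Icc 1 n, ∫⁻ x in Icc (z (k - 1)) (z k),
          ∫⁻ y in Icc (z (min (k + 1) n)) (z n), fE u x y
      ≤ ∑ k ∈ Finset.Icc 1 n,
          (ENNReal.ofReal (4 * κ) *
              (ENNReal.ofReal ((z k - z (k - 1))⁻¹) * l2Sq u (Icc (z (k - 1)) (z k)))
            + ∫⁻ y in Icc (z (min (k + 1) n)) (z n),
                w2f u y * ∫⁻ x in Icc (z (k - 1)) (z k), gkf x y) :=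
        Finset.sum_le_sum step1
    _ = ENNReal.ofReal (4 * κ) * W
        + ∑ k ∈ Finset.Icc 1 n,
            (∫⁻ y in Icc (z (min (k + 1) n)) (z n),
              w2f u y * ∫⁻ x in Icc (z (k - 1)) (z k), gkf x y) := by
        rw [Finset.sum_add_distrib, ← Finset.mul_sum, hW]
    _ ≤ ENNReal.ofReal (4 * κ) * W + ENNReal.ofReal (4 * κ) * W :=
        add_le_add_right step2 _
    _ = ENNReal.ofReal (8 * κ) * W := by
        rw [← add_mul, ← ENNReal.ofReal_add (by positivity) (by positivity)]
        congr 2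
        ring

lemma near_sum (n : ℕ) (hn : 1 ≤ n) (z : ℕ → ℝ)
    (hmono : ∀ i j, i ≤ j → j ≤ n → z i ≤ z j)
    (u : ℝ → ℝ) (hu : Measurable u) :
    ∑ k ∈ Finset.Icc 1 n, ∫⁻ x in Icc (z (k - 1)) (z k),
        ∫⁻ y in Icc (z (k - 2)) (z (min (k + 1) n)), fE u x y
      ≤ ∑ j ∈ Finset.range (n + 1), sobSemiSq u (Icc (z (j - 1)) (z (min (j + 1) n))) := by
  set D : ℕ → ENNReal := fun m =>
    ∫⁻ x in Icc (z m) (z (m + 1)), ∫⁻ y in Icc (z (m - 1)) (z (min (m + 1) n)), fE u x y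
    with hD
  set E : ℕ → ENNReal := fun k =>
    ∫⁻ x in Icc (z (k - 1)) (z k), ∫⁻ y in Icc (z k) (z (min (k + 1) n)), fE u x y
    with hE
  have hNB : ∀ k ∈ Finset.Icc 1 n,
      (∫⁻ x in Icc (z (k - 1)) (z k), ∫⁻ y in Icc (z (k - 2)) (z (min (k + 1) n)), fE u x y)
        ≤ D (k - 1) + E k := by
    intro k hk
    simp only [Finset.mem_Icc] at hk
    obtain ⟨hk1, hkn⟩ := hk
    have hDval : D (k - 1)
        = ∫⁻ x in Icc (z (k - 1)) (z k), ∫⁻ y in Icc (z (k - 2)) (z k), fE u x y := by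
      simp only [hD]
      rw [show k - 1 + 1 = k by omega, show k - 1 - 1 = k - 2 by omega, min_eq_left hkn]
    have hcov : Icc (z (k - 2)) (z (min (k + 1) n))
        = Icc (z (k - 2)) (z k) ∪ Icc (z k) (z (min (k + 1) n)) :=
      (Icc_union_Icc_eq_Icc (hmono (k - 2) k (by omega) hkn)
        (hmono k (min (k + 1) n) (by omega) (by omega))).symm
    calc (∫⁻ x in Icc (z (k - 1)) (z k), ∫⁻ y in Icc (z (k - 2)) (z (min (k + 1) n)), fE u x y)
        ≤ ∫⁻ x in Icc (z (k - 1)) (z k),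
            ((∫⁻ y in Icc (z (k - 2)) (z k), fE u x y)
              + ∫⁻ y in Icc (z k) (z (min (k + 1) n)), fE u x y) := by
          refine lintegral_mono fun x => ?_
          rw [hcov]
          exact lintegral_union_le _ _ _
      _ = (∫⁻ x in Icc (z (k - 1)) (z k), ∫⁻ y in Icc (z (k - 2)) (z k), fE u x y)
            + ∫⁻ x in Icc (z (k - 1)) (z k), ∫⁻ y in Icc (z k) (z (min (k + 1) n)), fE u x y :=
          lintegral_add_left (Measurable.lintegral_prod_right (fE_meas hu)) _
      _ = D (k - 1) + E k := by rw [hDval]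
  have hE0 : E 0 = 0 := by
    simp only [hE]
    rw [show (0 : ℕ) - 1 = 0 from rfl, Measure.restrict_eq_zero.mpr (by simp)]
    simp
  have hEn : E n = 0 := by
    simp only [hE]
    rw [min_eq_right (by omega)]
    calc (∫⁻ x in Icc (z (n - 1)) (z n), ∫⁻ y in Icc (z n) (z n), fE u x y)
        = ∫⁻ x in Icc (z (n - 1)) (z n), 0 := by
          refine lintegral_congr fun x => ?_
          rw [Measure.restrict_eq_zero.mpr (by simp)]
          simp
      _ = 0 := lintegral_zero
  have hDre : ∑ k ∈ Finset.Icc 1 n, D (k - 1) = ∑ m ∈ Finset.range n, D m := by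
    refine Finset.sum_nbij' (fun k => k - 1) (fun m => m + 1) ?_ ?_ ?_ ?_ ?_
    · intro a ha; simp only [Finset.mem_Icc] at ha; simp only [Finset.mem_range]; omega
    · intro a ha; simp only [Finset.mem_range] at ha; simp only [Finset.mem_Icc]; omega
    · intro a ha; simp only [Finset.mem_Icc] at ha; show a - 1 + 1 = a; omega
    · intro a ha; simp only [Finset.mem_range] at ha; show a + 1 - 1 = a; omega
    · intro a _; rfl
  have hEre : ∑ k ∈ Finset.Icc 1 n, E k = ∑ m ∈ Finset.range n, E m := by
    have h1 : Finset.Icc 0 n = insert 0 (Finset.Icc 1 n) := by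
      ext x; simp only [Finset.mem_Icc, Finset.mem_insert]; omega
    have h2 : Finset.range (n + 1) = Finset.Icc 0 n := by
      ext x; simp only [Finset.mem_Icc, Finset.mem_range]; omega
    have h3 : ∑ m ∈ Finset.range n, E m + E n = E 0 + ∑ k ∈ Finset.Icc 1 n, E k := by
      rw [← Finset.sum_range_succ, h2, h1, Finset.sum_insert (by simp)]
    rw [hE0, hEn, add_zero, zero_add] at h3
    exact h3.symm
  have hpair : ∀ m ∈ Finset.range n,
      D m + E m ≤ sobSemiSq u (Icc (z (m - 1)) (z (min (m + 1) n))) := by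
    intro m hm
    simp only [Finset.mem_range] at hm
    have hminm : min (m + 1) n = m + 1 := min_eq_left (by omega)
    have hEle : E m ≤ ∫⁻ x in Icc (z (m - 1)) (z m),
        ∫⁻ y in Icc (z (m - 1)) (z (m + 1)), fE u x y := by
      simp only [hE, hminm]
      exact lintegral_mono fun x =>
        lintegral_mono_set (Icc_subset_Icc_left (hmono (m - 1) m (by omega) (by omega)))
    have hDval : D m = ∫⁻ x in Icc (z m) (z (m + 1)),
        ∫⁻ y in Icc (z (m - 1)) (z (m + 1)), fE u x y := by
      simp only [hD, hminm]
    have hglue := lint_glue (fun x => ∫⁻ y in Icc (z (m - 1)) (z (m + 1)), fE u x y)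
      (hmono (m - 1) m (by omega) (by omega)) (hmono m (m + 1) (by omega) (by omega))
    calc D m + E m
        ≤ (∫⁻ x in Icc (z m) (z (m + 1)), ∫⁻ y in Icc (z (m - 1)) (z (m + 1)), fE u x y)
          + ∫⁻ x in Icc (z (m - 1)) (z m), ∫⁻ y in Icc (z (m - 1)) (z (m + 1)), fE u x y := by
          rw [hDval]; exact add_le_add_right hEle _
      _ = ∫⁻ x in Icc (z (m - 1)) (z (m + 1)),
            ∫⁻ y in Icc (z (m - 1)) (z (m + 1)), fE u x y := by
          rw [add_comm]; exact hglue
      _ = sobSemiSq u (Icc (z (m - 1)) (z (min (m + 1) n))) := by rw [hminm]; rfl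
  calc ∑ k ∈ Finset.Icc 1 n, ∫⁻ x in Icc (z (k - 1)) (z k),
          ∫⁻ y in Icc (z (k - 2)) (z (min (k + 1) n)), fE u x y
      ≤ ∑ k ∈ Finset.Icc 1 n, (D (k - 1) + E k) := Finset.sum_le_sum hNB
    _ = ∑ m ∈ Finset.range n, D m + ∑ m ∈ Finset.range n, E m := by
        rw [Finset.sum_add_distrib, hDre, hEre]
    _ = ∑ m ∈ Finset.range n, (D m + E m) := (Finset.sum_add_distrib).symm
    _ ≤ ∑ m ∈ Finset.range n, sobSemiSq u (Icc (z (m - 1)) (z (min (m + 1) n))) :=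
        Finset.sum_le_sum hpair
    _ ≤ ∑ j ∈ Finset.range (n + 1), sobSemiSq u (Icc (z (j - 1)) (z (min (j + 1) n))) :=
        Finset.sum_le_sum_of_subset (Finset.range_subset_range.mpr (by omega))

lemma core (L κ : ℝ) (hL : 0 < L) (hκ : 1 ≤ κ) (n : ℕ) (z : ℕ → ℝ)
    (hba : z n - z 0 = L) (hn : 1 ≤ n)
    (hinc : ∀ j < n, z j < z (j + 1))
    (hmesh : ∀ j, 1 ≤ j → j < n →
      (z (j + 1) - z j) / (z j - z (j - 1)) ≤ κ ∧
      (z j - z (j - 1)) / (z (j + 1) - z j) ≤ κ)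
    (u : ℝ → ℝ) (hu : Measurable u) :
    h12Sq u (Icc (z 0) (z n))
      ≤ ∑ j ∈ Finset.range (n + 1), sobSemiSq u (Icc (z (j - 1)) (z (min (j + 1) n)))
        + ENNReal.ofReal (L + 16 * κ) * ∑ j ∈ Finset.Icc 1 n,
            ENNReal.ofReal ((z j - z (j - 1))⁻¹) * l2Sq u (Icc (z (j - 1)) (z j)) := by
  have hκ0 : 0 < κ := lt_of_lt_of_le one_pos hκ
  have hmono : ∀ i j, i ≤ j → j ≤ n → z i ≤ z j := z_mono z n (fun i hi => (hinc i hi).le)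
  have hpos : ∀ k, 1 ≤ k → k ≤ n → 0 < z k - z (k - 1) := by
    intro k h1 h2
    have h := hinc (k - 1) (by omega)
    rw [Nat.sub_add_cancel h1] at h
    linarith
  have hmesh2 : ∀ k, 1 ≤ k → k < n → (z k - z (k - 1)) / κ ≤ z (k + 1) - z k := by
    intro k hk1 hklt
    have hd : 0 < z (k + 1) - z k := sub_pos.mpr (hinc k hklt)
    have h := (hmesh k hk1 hklt).2
    rw [div_le_iff₀ hd] at h
    rw [div_le_iff₀ hκ0]
    nlinarith [mul_comm κ (z (k + 1) - z k)]
  have hmesh1 : ∀ k, 2 ≤ k → k ≤ n → (z k - z (k - 1)) / κ ≤ z (k - 1) - z (k - 2) := by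
    intro k hk2 hkn
    have h := (hmesh (k - 1) (by omega) (by omega)).1
    rw [show k - 1 + 1 = k by omega, show k - 1 - 1 = k - 2 by omega] at h
    have hd : 0 < z (k - 1) - z (k - 2) := by
      have h' := hpos (k - 1) (by omega) (by omega)
      rwa [show k - 1 - 1 = k - 2 by omega] at h'
    rw [div_le_iff₀ hd] at h
    rw [div_le_iff₀ hκ0]
    nlinarith [mul_comm κ (z (k - 1) - z (k - 2))]
  set W := ∑ j ∈ Finset.Icc 1 n,
      ENNReal.ofReal ((z j - z (j - 1))⁻¹) * l2Sq u (Icc (z (j - 1)) (z j)) with hW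
  set S := ∑ j ∈ Finset.range (n + 1), sobSemiSq u (Icc (z (j - 1)) (z (min (j + 1) n))) with hS
  -- Step A : L² part
  have stepA : l2Sq u (Icc (z 0) (z n)) ≤ ENNReal.ofReal L * W := by
    have htile := lint_tile (fun x => ENNReal.ofReal (u x ^ 2)) z 0 n (by omega)
      (fun i h1 h2 => hmono i (i + 1) (by omega) (by omega))
    calc l2Sq u (Icc (z 0) (z n))
        = ∑ k ∈ Finset.Icc 1 n, l2Sq u (Icc (z (k - 1)) (z k)) := htile.symm
      _ ≤ ∑ k ∈ Finset.Icc 1 n, ENNReal.ofReal L *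
            (ENNReal.ofReal ((z k - z (k - 1))⁻¹) * l2Sq u (Icc (z (k - 1)) (z k))) := by
          apply Finset.sum_le_sum
          intro k hk
          simp only [Finset.mem_Icc] at hk
          have hpk := hpos k hk.1 hk.2
          have hkL : z k - z (k - 1) ≤ L := by
            have h1 := hmono 0 (k - 1) (by omega) (by omega)
            have h2 := hmono k n hk.2 le_rfl
            linarith
          have h1le : (1 : ENNReal) ≤ ENNReal.ofReal L * ENNReal.ofReal ((z k - z (k - 1))⁻¹) := by
            rw [← ENNReal.ofReal_mul hL.le, ← ENNReal.ofReal_one]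
            apply ENNReal.ofReal_le_ofReal
            rw [← div_eq_mul_inv]
            exact (one_le_div hpk).mpr hkL
          calc l2Sq u (Icc (z (k - 1)) (z k)) = 1 * l2Sq u (Icc (z (k - 1)) (z k)) :=
              (one_mul _).symm
            _ ≤ (ENNReal.ofReal L * ENNReal.ofReal ((z k - z (k - 1))⁻¹)) *
                l2Sq u (Icc (z (k - 1)) (z k)) := mul_le_mul_left h1le _
            _ = ENNReal.ofReal L *
                (ENNReal.ofReal ((z k - z (k - 1))⁻¹) * l2Sq u (Icc (z (k - 1)) (z k))) :=
              mul_assoc _ _ _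
      _ = ENNReal.ofReal L * W := by rw [hW, Finset.mul_sum]
  -- decompose the seminorm
  have hsob : sobSemiSq u (Icc (z 0) (z n))
      = ∑ k ∈ Finset.Icc 1 n, ∫⁻ x in Icc (z (k - 1)) (z k),
          ∫⁻ y in Icc (z 0) (z n), fE u x y :=
    (lint_tile (fun x => ∫⁻ y in Icc (z 0) (z n), fE u x y) z 0 n (by omega)
      (fun i h1 h2 => hmono i (i + 1) (by omega) (by omega))).symm
  have hGm : ∀ s : Set ℝ, Measurable fun x => ∫⁻ y in s, fE u x y :=
    fun s => Measurable.lintegral_prod_right (fE_meas hu)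
  have stepC : ∀ k ∈ Finset.Icc 1 n,
      (∫⁻ x in Icc (z (k - 1)) (z k), ∫⁻ y in Icc (z 0) (z n), fE u x y)
        ≤ (∫⁻ x in Icc (z (k - 1)) (z k),
              ∫⁻ y in Icc (z (k - 2)) (z (min (k + 1) n)), fE u x y)
          + (∫⁻ x in Icc (z (k - 1)) (z k), ∫⁻ y in Icc (z 0) (z (k - 2)), fE u x y)
          + (∫⁻ x in Icc (z (k - 1)) (z k),
              ∫⁻ y in Icc (z (min (k + 1) n)) (z n), fE u x y) := by
    intro k hk
    simp only [Finset.mem_Icc] at hk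
    have hcov : Icc (z 0) (z n)
        = (Icc (z 0) (z (k - 2)) ∪ Icc (z (k - 2)) (z (min (k + 1) n)))
            ∪ Icc (z (min (k + 1) n)) (z n) := by
      rw [Icc_union_Icc_eq_Icc (hmono 0 (k - 2) (by omega) (by omega))
          (hmono (k - 2) (min (k + 1) n) (by omega) (by omega)),
        Icc_union_Icc_eq_Icc (hmono 0 (min (k + 1) n) (by omega) (by omega))
          (hmono (min (k + 1) n) n (by omega) le_rfl)]
    have hpt : ∀ x, (∫⁻ y in Icc (z 0) (z n), fE u x y)
        ≤ (∫⁻ y in Icc (z (k - 2)) (z (min (k + 1) n)), fE u x y)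
          + (∫⁻ y in Icc (z 0) (z (k - 2)), fE u x y)
          + (∫⁻ y in Icc (z (min (k + 1) n)) (z n), fE u x y) := by
      intro x
      rw [hcov]
      calc ∫⁻ y in (Icc (z 0) (z (k - 2)) ∪ Icc (z (k - 2)) (z (min (k + 1) n)))
              ∪ Icc (z (min (k + 1) n)) (z n), fE u x y
          ≤ (∫⁻ y in Icc (z 0) (z (k - 2)) ∪ Icc (z (k - 2)) (z (min (k + 1) n)), fE u x y)
              + ∫⁻ y in Icc (z (min (k + 1) n)) (z n), fE u x y := lintegral_union_le _ _ _
        _ ≤ ((∫⁻ y in Icc (z 0) (z (k - 2)), fE u x y)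
              + ∫⁻ y in Icc (z (k - 2)) (z (min (k + 1) n)), fE u x y)
              + ∫⁻ y in Icc (z (min (k + 1) n)) (z n), fE u x y :=
            add_le_add_left (lintegral_union_le _ _ _) _
        _ = (∫⁻ y in Icc (z (k - 2)) (z (min (k + 1) n)), fE u x y)
              + (∫⁻ y in Icc (z 0) (z (k - 2)), fE u x y)
              + (∫⁻ y in Icc (z (min (k + 1) n)) (z n), fE u x y) := by ring
    calc (∫⁻ x in Icc (z (k - 1)) (z k), ∫⁻ y in Icc (z 0) (z n), fE u x y)
        ≤ ∫⁻ x in Icc (z (k - 1)) (z k),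
            ((∫⁻ y in Icc (z (k - 2)) (z (min (k + 1) n)), fE u x y)
              + (∫⁻ y in Icc (z 0) (z (k - 2)), fE u x y)
              + (∫⁻ y in Icc (z (min (k + 1) n)) (z n), fE u x y)) := lintegral_mono hpt
      _ = _ := by
          rw [lintegral_add_left (f := fun x => (∫⁻ y in Icc (z (k - 2)) (z (min (k + 1) n)), fE u x y) + ∫⁻ y in Icc (z 0) (z (k - 2)), fE u x y) ((hGm _).add (hGm _)), lintegral_add_left (hGm _)]
  have hsoble : sobSemiSq u (Icc (z 0) (z n)) ≤ S + ENNReal.ofReal (16 * κ) * W := by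
    rw [hsob]
    calc ∑ k ∈ Finset.Icc 1 n, ∫⁻ x in Icc (z (k - 1)) (z k),
            ∫⁻ y in Icc (z 0) (z n), fE u x y
        ≤ ∑ k ∈ Finset.Icc 1 n,
            ((∫⁻ x in Icc (z (k - 1)) (z k),
                ∫⁻ y in Icc (z (k - 2)) (z (min (k + 1) n)), fE u x y)
              + (∫⁻ x in Icc (z (k - 1)) (z k), ∫⁻ y in Icc (z 0) (z (k - 2)), fE u x y)
              + (∫⁻ x in Icc (z (k - 1)) (z k),
                  ∫⁻ y in Icc (z (min (k + 1) n)) (z n), fE u x y)) :=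
          Finset.sum_le_sum stepC
      _ = (∑ k ∈ Finset.Icc 1 n, ∫⁻ x in Icc (z (k - 1)) (z k),
              ∫⁻ y in Icc (z (k - 2)) (z (min (k + 1) n)), fE u x y)
          + (∑ k ∈ Finset.Icc 1 n, ∫⁻ x in Icc (z (k - 1)) (z k),
              ∫⁻ y in Icc (z 0) (z (k - 2)), fE u x y)
          + (∑ k ∈ Finset.Icc 1 n, ∫⁻ x in Icc (z (k - 1)) (z k),
              ∫⁻ y in Icc (z (min (k + 1) n)) (z n), fE u x y) := by
          rw [Finset.sum_add_distrib, Finset.sum_add_distrib]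
      _ ≤ S + ENNReal.ofReal (8 * κ) * W + ENNReal.ofReal (8 * κ) * W := by
          refine add_le_add (add_le_add ?_ ?_) ?_
          · rw [hS]; exact near_sum n hn z hmono u hu
          · rw [hW]; exact far_sum_L κ hκ0 n z hmono hpos hmesh1 hmesh2 u hu
          · rw [hW]; exact far_sum_R κ hκ0 n z hmono hpos hmesh1 hmesh2 u hu
      _ = S + ENNReal.ofReal (16 * κ) * W := by
          rw [add_assoc]
          congr 1
          rw [← add_mul, ← ENNReal.ofReal_add (by positivity) (by positivity)]
          congr 2
          ring
  calc h12Sq u (Icc (z 0) (z n))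
      = l2Sq u (Icc (z 0) (z n)) + sobSemiSq u (Icc (z 0) (z n)) := rfl
    _ ≤ ENNReal.ofReal L * W + (S + ENNReal.ofReal (16 * κ) * W) := add_le_add stepA hsoble
    _ = S + (ENNReal.ofReal L * W + ENNReal.ofReal (16 * κ) * W) := by ring
    _ = S + ENNReal.ofReal (L + 16 * κ) * W := by
        rw [← add_mul, ← ENNReal.ofReal_add hL.le (by positivity)]

/-- Lemma 3.3: the global `H^{1/2}`-norm is bounded by the sum of the local patch
seminorms plus weighted elementwise `L²`-contributions. -/
theorem h12_le_patches_plus_weighted_l2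
    (L : ℝ) (hL : 0 < L) (κ : ℝ) (hκ : 1 ≤ κ) :
    ∃ C₁ : ℝ, 0 < C₁ ∧
      ∀ (a b : ℝ) (n : ℕ) (z : ℕ → ℝ),
        b - a = L → 1 ≤ n → z 0 = a → z n = b →
        (∀ j < n, z j < z (j + 1)) →
        (∀ j, 1 ≤ j → j < n →
          (z (j + 1) - z j) / (z j - z (j - 1)) ≤ κ ∧
          (z j - z (j - 1)) / (z (j + 1) - z j) ≤ κ) →
        ∀ u : ℝ → ℝ, MemLp u 2 (volume.restrict (Icc a b)) →
          h12Sq u (Icc a b)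
            ≤ ∑ j ∈ Finset.range (n + 1),
                sobSemiSq u (Icc (z (j - 1)) (z (min (j + 1) n)))
              + ENNReal.ofReal C₁ * ∑ j ∈ Finset.Icc 1 n,
                  ENNReal.ofReal ((z j - z (j - 1))⁻¹) *
                    l2Sq u (Icc (z (j - 1)) (z j)) := by
  refine ⟨L + 16 * κ, by linarith, ?_⟩
  intro a b n z hba hn hz0 hzn hinc hmesh u hMem
  have hae : u =ᵐ[volume.restrict (Icc a b)] hMem.1.mk u := hMem.1.ae_eq_mk
  set v := hMem.1.mk u with hv
  have hvm : Measurable v := hMem.1.stronglyMeasurable_mk.measurable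
  have hl2c : ∀ s : Set ℝ, s ⊆ Icc a b → l2Sq u s = l2Sq v s := by
    intro s hs
    refine lintegral_congr_ae ?_
    filter_upwards [ae_restrict_of_ae_restrict_of_subset hs hae] with x hx
    rw [hx]
  have hsobc : ∀ s : Set ℝ, s ⊆ Icc a b → sobSemiSq u s = sobSemiSq v s := by
    intro s hs
    refine lintegral_congr_ae ?_
    filter_upwards [ae_restrict_of_ae_restrict_of_subset hs hae] with x hx
    refine lintegral_congr_ae ?_
    filter_upwards [ae_restrict_of_ae_restrict_of_subset hs hae] with y hy
    rw [hx, hy]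
  have hmono' : ∀ i j, i ≤ j → j ≤ n → z i ≤ z j := z_mono z n (fun i hi => (hinc i hi).le)
  have hzn0 : z n - z 0 = L := by rw [hz0, hzn]; exact hba
  have hIab : Icc (z 0) (z n) = Icc a b := by rw [hz0, hzn]
  have key := core L κ hL hκ n z hzn0 hn hinc hmesh v hvm
  rw [hIab] at key
  have hsubset : ∀ i j : ℕ, i ≤ n → j ≤ n → Icc (z i) (z j) ⊆ Icc a b := by
    intro i j hi hj
    rw [← hIab]
    exact Icc_subset_Icc (hmono' 0 i (by omega) hi) (hmono' j n hj le_rfl)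
  have e1 : h12Sq u (Icc a b) = h12Sq v (Icc a b) := by
    unfold h12Sq
    rw [hl2c _ (subset_refl _), hsobc _ (subset_refl _)]
  have e2 : ∑ j ∈ Finset.range (n + 1), sobSemiSq u (Icc (z (j - 1)) (z (min (j + 1) n)))
      = ∑ j ∈ Finset.range (n + 1), sobSemiSq v (Icc (z (j - 1)) (z (min (j + 1) n))) := by
    refine Finset.sum_congr rfl fun j hj => ?_
    simp only [Finset.mem_range] at hj
    exact hsobc _ (hsubset (j - 1) (min (j + 1) n) (by omega) (by omega))
  have e3 : ∑ j ∈ Finset.Icc 1 n, ENNReal.ofReal ((z j - z (j - 1))⁻¹) *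
        l2Sq u (Icc (z (j - 1)) (z j))
      = ∑ j ∈ Finset.Icc 1 n, ENNReal.ofReal ((z j - z (j - 1))⁻¹) *
        l2Sq v (Icc (z (j - 1)) (z j)) := by
    refine Finset.sum_congr rfl fun j hj => ?_
    simp only [Finset.mem_Icc] at hj
    rw [hl2c _ (hsubset (j - 1) j (by omega) hj.2)]
  rw [e1, e2, e3]
  exact key
end
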